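/- arXiv:1306.2291 — 3 statements merged into one kernel-verified Lean document; each statement's English description precedes it below -/
import Mathlib

section
/- Optimality of parallel abstract unification in the general case: let U be a finite set of variables, let S be a set of ω-sharing groups whose supports are contained in U and which contains the empty multiset, let θ be an idempotent substitution (possibly with vars(θ) ⊄ U), let V = U ∪ vars(θ), and let S' = S ∪ { {{v}} : v ∈ vars(θ)\U } (adding a singleton multiset for each variable of θ not in U). Then for every B ∈ mgu_p(S',θ) there exist an idempotent substitution δ with vars(δ|_U) ∩ vars(θ) ⊆ U, satisfying δ⁻¹(v)|_U ∈ S for every variable v ∈ 𝒱, an idempotent most general unifier η of the set of equations Eq(δ|_U) ∪ Eq(θ), and a variable w ∈ 𝒱, such that η⁻¹(w)|_V = B. -/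
open Classical

/-- First-order terms over a signature `Sig` with arity function `ar`,
    with variables drawn from `ℕ` (a countably infinite set). -/
inductive FTerm (Sig : Type) (ar : Sig → ℕ) : Type where
  | var : ℕ → FTerm Sig ar
  | app : (f : Sig) → (Fin (ar f) → FTerm Sig ar) → FTerm Sig ar

variable {Sig : Type} {ar : Sig → ℕ}

namespace FTerm

/-- Number of occurrences of the variable `v` in a term. -/
def occ (v : ℕ) : FTerm Sig ar → ℕ
  | var w => if w = v then 1 else 0
  | app _ ts => ∑ i, occ v (ts i)

/-- Application of a substitution (a total map from variables to terms) to a term. -/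
def subst (δ : ℕ → FTerm Sig ar) : FTerm Sig ar → FTerm Sig ar
  | var v => δ v
  | app f ts => app f (fun i => (ts i).subst δ)

end FTerm

/-- Domain of a substitution. -/
def domS (θ : ℕ → FTerm Sig ar) : Set ℕ := {x | θ x ≠ FTerm.var x}

/-- Set of variables occurring in a term. -/
def varsT (t : FTerm Sig ar) : Set ℕ := {v | FTerm.occ v t ≠ 0}

/-- Range of a substitution. -/
def rngS (θ : ℕ → FTerm Sig ar) : Set ℕ := ⋃ x ∈ domS θ, varsT (θ x)

/-- Variables of a substitution. -/
def varsS (θ : ℕ → FTerm Sig ar) : Set ℕ := domS θ ∪ rngS θ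

/-- A substitution is idempotent iff its domain and range are disjoint. -/
def Idem (θ : ℕ → FTerm Sig ar) : Prop := domS θ ∩ rngS θ = ∅

/-- Multiplicity `χ(B,t)` of an ω-sharing group `B` in a term `t`. -/
def chi (B : ℕ →₀ ℕ) (t : FTerm Sig ar) : ℕ := ∑ v ∈ B.support, B v * FTerm.occ v t

/-- A parallel sharing graph for a set `S` of ω-sharing groups and an
    (idempotent) substitution `θ`.  The layers are indexed by the variables in
    the domain of `θ` (the function `layer` assigns to each edge its layer, so
    the edge sets of different layers are automatically pairwise disjoint). -/
structure PSG (Sig : Type) (ar : Sig → ℕ) (S : Set (ℕ →₀ ℕ)) (θ : ℕ → FTerm Sig ar) where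
  N : Type
  fintypeN : Fintype N
  nonemptyN : Nonempty N
  E : Type
  fintypeE : Fintype E
  layer : E → ℕ
  src : E → N
  tgt : E → N
  label : N → (ℕ →₀ ℕ)
  label_mem : ∀ n, label n ∈ S
  layer_mem : ∀ e, layer e ∈ domS θ
  out_deg : ∀ (n : N), ∀ x ∈ domS θ,
    Nat.card {e : E // layer e = x ∧ src e = n} = chi (label n) (FTerm.var x : FTerm Sig ar)
  in_deg : ∀ (n : N), ∀ x ∈ domS θ,
    Nat.card {e : E // layer e = x ∧ tgt e = n} = chi (label n) (θ x)
  conn : ∀ a b : N, Relation.ReflTransGen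
    (fun a b => ∃ e : E, (src e = a ∧ tgt e = b) ∨ (src e = b ∧ tgt e = a)) a b

attribute [instance] PSG.fintypeN PSG.fintypeE PSG.nonemptyN

/-- The resultant ω-sharing group of a parallel sharing graph. -/
noncomputable def PSG.res {S : Set (ℕ →₀ ℕ)} {θ : ℕ → FTerm Sig ar}
    (G : PSG Sig ar S θ) : ℕ →₀ ℕ := ∑ n : G.N, G.label n

/-- Parallel abstract unification. -/
def mguP (S : Set (ℕ →₀ ℕ)) (θ : ℕ → FTerm Sig ar) : Set (ℕ →₀ ℕ) :=
  { B | ∃ G : PSG Sig ar S θ, G.res = B }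

/-- The single-binding substitution `{x/t}`. -/
def sbind (x : ℕ) (t : FTerm Sig ar) : ℕ → FTerm Sig ar :=
  fun v => if v = x then t else FTerm.var v

/-- `θ⁻¹(v)`: the ω-sharing group mapping each variable `w` to the number of
occurrences of `v` in `θ(w)` (as a plain function). -/
def invSub (θ : ℕ → FTerm Sig ar) (v : ℕ) : ℕ → ℕ := fun w => FTerm.occ v (θ w)

/-- Restriction `M|_U` of a multiset of variables to a finite set `U`. -/
noncomputable def restr (U : Finset ℕ) (f : ℕ → ℕ) : ℕ →₀ ℕ :=
  Finsupp.onFinset U (fun v => if v ∈ U then f v else 0)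
    (fun v h => by by_contra hc; simp [hc] at h)

/-- Projection `δ|_U` of a substitution on a set `U` of variables: it acts as
`δ` on `U` and as the identity elsewhere. -/
def projS (U : Finset ℕ) (δ : ℕ → FTerm Sig ar) : ℕ → FTerm Sig ar :=
  fun v => if v ∈ U then δ v else FTerm.var v

/-- The set of equations `Eq(θ) = { x = θ(x) : x ∈ dom(θ) }`. -/
def EqSet (θ : ℕ → FTerm Sig ar) : Set (FTerm Sig ar × FTerm Sig ar) :=
  { p | ∃ x ∈ domS θ, p = (FTerm.var x, θ x) }

/-- `η` is a unifier of the set of equations `E`. -/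
def Unifies (η : ℕ → FTerm Sig ar) (E : Set (FTerm Sig ar × FTerm Sig ar)) : Prop :=
  ∀ p ∈ E, FTerm.subst η p.1 = FTerm.subst η p.2

/-- `η` is a most general unifier of the set of equations `E`: it is a unifier
and every unifier factors through it. -/
def IsMGU (η : ℕ → FTerm Sig ar) (E : Set (FTerm Sig ar × FTerm Sig ar)) : Prop :=
  Unifies η E ∧ ∀ τ : ℕ → FTerm Sig ar, Unifies τ E →
    ∃ τ' : ℕ → FTerm Sig ar, ∀ x, τ x = FTerm.subst τ' (η x)

namespace FTerm

variable {Sig : Type} {ar : Sig → ℕ}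

/-- Finset of variables of a term. -/
def varsF : FTerm Sig ar → Finset ℕ
  | var v => {v}
  | app _ ts => Finset.univ.biUnion (fun i => varsF (ts i))

lemma occ_eq_zero_of_not_mem_varsF {v : ℕ} {t : FTerm Sig ar} (h : v ∉ varsF t) :
    occ v t = 0 := by
  induction t with
  | var w =>
      simp [varsF] at h
      simp [occ, Ne.symm h]
  | app f ts ih =>
      simp [varsF] at h
      simp only [occ]
      exact Finset.sum_eq_zero fun i _ => ih i (h i)

lemma mem_varsF_of_occ_ne {v : ℕ} {t : FTerm Sig ar} (h : occ v t ≠ 0) : v ∈ varsF t := by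
  by_contra hc; exact h (occ_eq_zero_of_not_mem_varsF hc)

lemma varsT_eq_varsF (t : FTerm Sig ar) : varsT t = (varsF t : Set ℕ) := by
  ext v
  constructor
  · exact fun h => mem_varsF_of_occ_ne h
  · intro h
    simp only [varsT, Set.mem_setOf_eq]
    intro h0
    induction t with
    | var w =>
        simp [varsF] at h
        simp [occ, h] at h0
    | app f ts ih =>
        simp [varsF] at h
        obtain ⟨i, hi⟩ := h
        simp only [occ, Finset.sum_eq_zero_iff, Finset.mem_univ, forall_true_left] at h0
        exact ih i hi (h0 i)

lemma subst_congr {σ σ' : ℕ → FTerm Sig ar} {t : FTerm Sig ar}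
    (h : ∀ v ∈ varsF t, σ v = σ' v) : subst σ t = subst σ' t := by
  induction t with
  | var v => exact h v (by simp [varsF])
  | app f ts ih =>
      simp only [subst]
      congr 1
      funext i
      exact ih i (fun v hv => h v (by simp [varsF]; exact ⟨i, hv⟩))

lemma subst_subst (τ σ : ℕ → FTerm Sig ar) (t : FTerm Sig ar) :
    subst τ (subst σ t) = subst (fun v => subst τ (σ v)) t := by
  induction t with
  | var v => rfl
  | app f ts ih =>
      simp only [subst]
      congr 1
      funext i
      exact ih i

lemma occ_subst (v : ℕ) (σ : ℕ → FTerm Sig ar) (t : FTerm Sig ar) :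
    occ v (subst σ t) = ∑ u ∈ varsF t, occ u t * occ v (σ u) := by
  induction t with
  | var w => simp [subst, varsF, occ]
  | app f ts ih =>
      show ∑ i, occ v (subst σ (ts i)) = _
      calc ∑ i, occ v (subst σ (ts i))
          = ∑ i, ∑ u ∈ varsF (ts i), occ u (ts i) * occ v (σ u) :=
            Finset.sum_congr rfl fun i _ => ih i
        _ = ∑ i, ∑ u ∈ varsF (app f ts), occ u (ts i) * occ v (σ u) :=
            Finset.sum_congr rfl fun i _ => Finset.sum_subset
              (by intro u hu; simp [varsF]; exact ⟨i, hu⟩)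
              (fun u _ hnu => by rw [occ_eq_zero_of_not_mem_varsF hnu, zero_mul])
        _ = ∑ u ∈ varsF (app f ts), ∑ i, occ u (ts i) * occ v (σ u) := Finset.sum_comm
        _ = ∑ u ∈ varsF (app f ts), occ u (app f ts) * occ v (σ u) := by
            refine Finset.sum_congr rfl fun u _ => ?_
            show _ = (∑ i, occ u (ts i)) * occ v (σ u)
            rw [Finset.sum_mul]

end FTerm
namespace FTerm

variable {Sig : Type} {ar : Sig → ℕ}

section Mk

variable (hsig : ∀ k : ℕ, ∃ f : Sig, ar f = k)

/-- A function symbol of arity `k`. -/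
noncomputable def fsym (k : ℕ) : Sig := (hsig k).choose

lemma ar_fsym (k : ℕ) : ar (fsym hsig k) = k := (hsig k).choose_spec

/-- The flat term `f_k(a_0, …, a_{k-1})`. -/
noncomputable def mk (k : ℕ) (a : Fin k → FTerm Sig ar) : FTerm Sig ar :=
  app (fsym hsig k) (fun i => a (Fin.cast (ar_fsym hsig k) i))

lemma mk_ne_var (k : ℕ) (a : Fin k → FTerm Sig ar) (v : ℕ) : mk hsig k a ≠ var v := by
  simp [mk]

lemma subst_mk (τ : ℕ → FTerm Sig ar) (k : ℕ) (a : Fin k → FTerm Sig ar) :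
    subst τ (mk hsig k a) = mk hsig k (fun i => subst τ (a i)) := rfl

lemma occ_mk (v : ℕ) (k : ℕ) (a : Fin k → FTerm Sig ar) :
    occ v (mk hsig k a) = ∑ i : Fin k, occ v (a i) := by
  show ∑ i : Fin (ar (fsym hsig k)), occ v (a (Fin.cast (ar_fsym hsig k) i)) = _
  exact Fintype.sum_equiv (finCongr (ar_fsym hsig k)) _ _ (fun i => rfl)

lemma mk_inj {k : ℕ} {a b : Fin k → FTerm Sig ar} (h : mk hsig k a = mk hsig k b) :
    ∀ i, a i = b i := by
  intro j
  have h2 := eq_of_heq (FTerm.app.inj h).2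
  have := congrFun h2 (Fin.cast (ar_fsym hsig k).symm j)
  simpa using this

end Mk

/-- The list of occurrences (path, variable) of a term. -/
def occList : FTerm Sig ar → List (List ℕ × ℕ)
  | var v => [([], v)]
  | app f ts => (List.finRange (ar f)).flatMap
      (fun i => (occList (ts i)).map (fun qv => (i.val :: qv.1, qv.2)))

/-- Replace each variable occurrence of `t` by a term depending on its path;
`p` is the path prefix accumulated so far. -/
def mapOcc (g : List ℕ → FTerm Sig ar) : List ℕ → FTerm Sig ar → FTerm Sig ar
  | p, var _ => g p
  | p, app f ts => app f (fun i => mapOcc g (p ++ [i.val]) (ts i))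

lemma subst_mapOcc (τ : ℕ → FTerm Sig ar) (g : List ℕ → FTerm Sig ar)
    (t : FTerm Sig ar) (p : List ℕ) :
    subst τ (mapOcc g p t) = mapOcc (fun q => subst τ (g q)) p t := by
  induction t generalizing p with
  | var v => rfl
  | app f ts ih =>
      show app f _ = app f _
      congr 1
      funext i
      exact ih i _

lemma list_sum_map {α β : Type*} [AddCommMonoid β] (l : List α) (f : α → β) :
    (l.map f).sum = ∑ i : Fin l.length, f (l.get i) := by
  conv_lhs => rw [← List.ofFn_get l]
  rw [List.map_ofFn, List.sum_ofFn]
  rfl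

lemma occ_mapOcc (u : ℕ) (g : List ℕ → FTerm Sig ar) (t : FTerm Sig ar) (p : List ℕ) :
    occ u (mapOcc g p t) = ((occList t).map (fun qv => occ u (g (p ++ qv.1)))).sum := by
  induction t generalizing p with
  | var v => simp [mapOcc, occList]
  | app f ts ih =>
      show ∑ i, occ u (mapOcc g (p ++ [i.val]) (ts i)) = _
      rw [occList, List.map_flatMap, List.flatMap, List.sum_flatten, List.map_map,
        Fin.sum_univ_def]
      refine congrArg List.sum (List.map_congr_left (fun i _ => ?_))
      rw [ih i]
      show _ = (List.map _ (List.map _ _)).sum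
      rw [List.map_map]
      refine congrArg List.sum (List.map_congr_left (fun qv _ => ?_))
      simp [List.append_assoc]

lemma occList_sum (F : ℕ → ℕ) (t : FTerm Sig ar) :
    ((occList t).map (fun qv => F qv.2)).sum = ∑ u ∈ varsF t, occ u t * F u := by
  induction t with
  | var v => simp [occList, varsF, occ]
  | app f ts ih =>
      rw [occList, List.map_flatMap, List.flatMap, List.sum_flatten, List.map_map]
      rw [← Fin.sum_univ_def]
      have step : ∀ i : Fin (ar f),
          ((List.map (fun qv => F qv.2) (List.map (fun qv => (i.val :: qv.1, qv.2))
            (occList (ts i))))).sum = ∑ u ∈ varsF (ts i), occ u (ts i) * F u := by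
        intro i
        rw [List.map_map]
        exact ih i
      calc ∑ i : Fin (ar f), (List.map (fun qv => F qv.2)
              (List.map (fun qv => (i.val :: qv.1, qv.2)) (occList (ts i)))).sum
          = ∑ i : Fin (ar f), ∑ u ∈ varsF (ts i), occ u (ts i) * F u :=
            Finset.sum_congr rfl fun i _ => step i
        _ = ∑ i : Fin (ar f), ∑ u ∈ varsF (app f ts), occ u (ts i) * F u :=
            Finset.sum_congr rfl fun i _ => Finset.sum_subset
              (by intro u hu; simp [varsF]; exact ⟨i, hu⟩)
              (fun u _ hnu => by rw [occ_eq_zero_of_not_mem_varsF hnu, zero_mul])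
        _ = ∑ u ∈ varsF (app f ts), ∑ i, occ u (ts i) * F u := Finset.sum_comm
        _ = ∑ u ∈ varsF (app f ts), occ u (app f ts) * F u := by
            refine Finset.sum_congr rfl fun u _ => ?_
            show _ = (∑ i, occ u (ts i)) * F u
            rw [Finset.sum_mul]

lemma mapOcc_decomp {τ : ℕ → FTerm Sig ar} {g : List ℕ → FTerm Sig ar}
    {t : FTerm Sig ar} {p : List ℕ}
    (h : subst τ (mapOcc g p t) = subst τ t) :
    ∀ qv ∈ occList t, subst τ (g (p ++ qv.1)) = τ qv.2 := by
  induction t generalizing p with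
  | var v =>
      intro qv hqv
      simp [occList] at hqv
      subst hqv
      simpa [mapOcc, subst] using h
  | app f ts ih =>
      intro qv hqv
      have h2 := eq_of_heq (FTerm.app.inj h).2
      simp only [occList, List.mem_flatMap, List.mem_map] at hqv
      obtain ⟨i, _, qv', hqv', rfl⟩ := hqv
      have := ih i (p := p ++ [i.val]) (congrFun h2 i) qv' hqv'
      simpa [List.append_assoc] using this

lemma occList_paths_nodup (t : FTerm Sig ar) : ((occList t).map Prod.fst).Nodup := by
  induction t with
  | var v => simp [occList]
  | app f ts ih =>
      rw [occList, List.map_flatMap]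
      rw [List.nodup_flatMap]
      constructor
      · intro i _
        rw [List.map_map]
        show (List.map ((Prod.fst) ∘ (fun qv : List ℕ × ℕ => ((i.val : ℕ) :: qv.1, qv.2)))
          (occList (ts i))).Nodup
        rw [show ((Prod.fst) ∘ (fun qv : List ℕ × ℕ => ((i.val : ℕ) :: qv.1, qv.2)))
            = (fun q => (i.val :: q)) ∘ Prod.fst from rfl, ← List.map_map]
        exact (ih i).map (fun a b hab => by injection hab)
      · have hnd : (List.finRange (ar f)).Nodup := List.nodup_finRange _
        refine List.Pairwise.imp_of_mem ?_ hnd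
        intro i j _ _ hij
        rw [Function.onFun, List.disjoint_left]
        intro q hq hq'
        simp only [List.map_map, List.mem_map] at hq hq'
        obtain ⟨a, _, rfl⟩ := hq
        obtain ⟨b, _, hb⟩ := hq'
        have : (i.val : ℕ) = j.val := by
          have := hb.symm
          injection this
        exact hij (Fin.ext this)

lemma occList_mem_varsF {t : FTerm Sig ar} : ∀ qv ∈ occList t, qv.2 ∈ varsF t := by
  induction t with
  | var v => intro qv hqv; simp [occList] at hqv; subst hqv; simp [varsF]
  | app f ts ih =>
      intro qv hqv
      simp only [occList, List.mem_flatMap, List.mem_map] at hqv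
      obtain ⟨i, _, qv', hqv', rfl⟩ := hqv
      simp only [varsF, Finset.mem_biUnion, Finset.mem_univ]
      exact ⟨i, trivial, ih i qv' hqv'⟩

lemma occList_nodup (t : FTerm Sig ar) : (occList t).Nodup :=
  (occList_paths_nodup t).of_map _

end FTerm
open Classical in
/-- An equiv from a `Nat.card` equality. -/
noncomputable def equivOfNatCard (A B : Type*) [Finite A] [Finite B]
    (h : Nat.card A = Nat.card B) : A ≃ B := by
  have fA := Fintype.ofFinite A
  have fB := Fintype.ofFinite B
  exact Fintype.equivOfCardEq (by rwa [← Nat.card_eq_fintype_card, ← Nat.card_eq_fintype_card])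

lemma natcard_sigma' {I : Type*} [Fintype I] (F : I → Type*) [∀ i, Finite (F i)] :
    Nat.card (Σ i, F i) = ∑ i, Nat.card (F i) := by
  classical
  letI : ∀ i, Fintype (F i) := fun i => Fintype.ofFinite _
  simp [Nat.card_eq_fintype_card]

lemma natcard_partition {E N : Type*} [Finite E] (Q : E → Prop) (f : E → N)
    [Fintype N] :
    ∑ m : N, Nat.card {e : E // Q e ∧ f e = m} = Nat.card {e : E // Q e} := by
  rw [← natcard_sigma']
  exact Nat.card_congr
    { toFun := fun s => ⟨s.2.1, s.2.2.1⟩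
      invFun := fun e => ⟨f e.1, e.1, e.2, rfl⟩
      left_inv := by rintro ⟨m, e, hQ, rfl⟩; rfl
      right_inv := by rintro ⟨e, hQ⟩; rfl }

lemma natcard_fiber_equiv {A B : Type*} [Finite B] (e : A ≃ B) (P : B → Prop) :
    Nat.card {a : A // P (e a)} = Nat.card {b : B // P b} :=
  Nat.card_congr (e.subtypeEquiv (fun _ => Iff.rfl))

lemma natcard_sigma_subtype {I : Type*} [Fintype I] (F : I → Type*) [∀ i, Finite (F i)]
    (P : (Σ i, F i) → Prop) :
    Nat.card {s : Σ i, F i // P s} = ∑ i, Nat.card {j : F i // P ⟨i, j⟩} := by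
  rw [← natcard_sigma']
  exact Nat.card_congr
    { toFun := fun s => ⟨s.1.1, s.1.2, by cases s with | mk s h => cases s; exact h⟩
      invFun := fun t => ⟨⟨t.1, t.2.1⟩, t.2.2⟩
      left_inv := by rintro ⟨⟨i, j⟩, h⟩; rfl
      right_inv := by rintro ⟨i, j, h⟩; rfl }

lemma natcard_true {A : Type*} [Finite A] : Nat.card {a : A // True} = Nat.card A :=
  Nat.card_congr (Equiv.subtypeUnivEquiv (fun _ => trivial))

lemma natcard_pos_of_elem {A : Type*} [Finite A] (a : A) : 0 < Nat.card A :=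
  Nat.card_pos_iff.mpr ⟨⟨a⟩, inferInstance⟩

/-- Counting an indicator over `Fin k`. -/
lemma natcard_filter_fin {k : ℕ} (P : Fin k → Prop) :
    Nat.card {i : Fin k // P i} = ∑ i : Fin k, (if P i then 1 else 0) := by
  classical
  rw [Nat.card_eq_fintype_card, Fintype.card_subtype, Finset.card_filter]

section Ctx

variable {Sig : Type} {ar : Sig → ℕ}

/-- All the data of the theorem, bundled. -/
structure Ctx (Sig : Type) (ar : Sig → ℕ) where
  hsig : ∀ k : ℕ, ∃ f : Sig, ar f = k
  U : Finset ℕ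
  S : Set (ℕ →₀ ℕ)
  hS0 : (0 : ℕ →₀ ℕ) ∈ S
  hSU : ∀ B ∈ S, ∀ v ∈ (B : ℕ →₀ ℕ).support, v ∈ U
  θ : ℕ → FTerm Sig ar
  hfin : (domS θ).Finite
  hidem : Idem θ
  S' : Set (ℕ →₀ ℕ)
  hS' : S' = S ∪ { A | ∃ v ∈ varsS θ \ ↑U, A = Finsupp.single v 1 }
  G : PSG Sig ar S' θ

namespace Ctx

variable (C : Ctx Sig ar)

/-- Domain of θ as a finset. -/
noncomputable def D : Finset ℕ := C.hfin.toFinset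

lemma mem_D {x : ℕ} : x ∈ C.D ↔ x ∈ domS C.θ := C.hfin.mem_toFinset

/-- Range of θ as a finset. -/
noncomputable def rngF : Finset ℕ := C.D.biUnion (fun x => FTerm.varsF (C.θ x))

lemma rng_eq : rngS C.θ = (C.rngF : Set ℕ) := by
  ext v
  simp only [rngS, Set.mem_iUnion, rngF, Finset.coe_biUnion, Finset.mem_coe, C.mem_D]
  constructor
  · rintro ⟨x, hx, hv⟩
    exact ⟨x, hx, by rwa [FTerm.varsT_eq_varsF] at hv⟩
  · rintro ⟨x, hx, hv⟩
    exact ⟨x, hx, by rwa [FTerm.varsT_eq_varsF]⟩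

lemma mem_rngF {v : ℕ} : v ∈ C.rngF ↔ v ∈ rngS C.θ := by
  rw [C.rng_eq]; rfl

lemma not_domS_of_rngS {v : ℕ} (h : v ∈ rngS C.θ) : v ∉ domS C.θ := by
  intro hd
  have : v ∈ domS C.θ ∩ rngS C.θ := ⟨hd, h⟩
  rw [C.hidem] at this
  exact this

lemma occ_dom_rng {x y : ℕ} (hx : x ∈ domS C.θ) (hy : y ∈ domS C.θ) :
    FTerm.occ x (C.θ y) = 0 := by
  by_contra h
  exact C.not_domS_of_rngS (Set.mem_biUnion hy h) hx

/-- Finset of variables to avoid when choosing fresh variables. -/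
noncomputable def avoid : Finset ℕ := C.U ∪ C.D ∪ C.rngF

/-- Fresh variables indexed by nodes. -/
noncomputable def z (n : C.G.N) : ℕ :=
  C.avoid.sup id + 1 + ((Fintype.equivFin C.G.N) n).val

lemma z_inj : Function.Injective C.z := by
  intro a b h
  have : ((Fintype.equivFin C.G.N) a).val = ((Fintype.equivFin C.G.N) b).val := by
    unfold z at h; omega
  exact (Fintype.equivFin C.G.N).injective (Fin.ext this)

lemma z_not_avoid (n : C.G.N) : C.z n ∉ C.avoid := by
  intro h
  have h2 := Finset.le_sup (f := id) h
  simp only [id] at h2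
  unfold z at h2
  omega

lemma z_not_U (n : C.G.N) : C.z n ∉ C.U := fun h =>
  C.z_not_avoid n (Finset.mem_union_left _ (Finset.mem_union_left _ h))

lemma z_not_dom (n : C.G.N) : C.z n ∉ domS C.θ := fun h =>
  C.z_not_avoid n (Finset.mem_union_left _ (Finset.mem_union_right _ (C.mem_D.mpr h)))

lemma z_not_rng (n : C.G.N) : C.z n ∉ rngS C.θ := fun h =>
  C.z_not_avoid n (Finset.mem_union_right _ (C.mem_rngF.mpr h))

/-- The resultant sharing group. -/
noncomputable def B : ℕ →₀ ℕ := C.G.res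

lemma B_apply (v : ℕ) : C.B v = ∑ n : C.G.N, C.G.label n v := by
  simp [B, PSG.res, Finsupp.finset_sum_apply]

/-- The nodes whose label is supported in `U`. -/
def NS (n : C.G.N) : Prop := ∀ v ∈ (C.G.label n).support, v ∈ C.U

lemma label_mem' (n : C.G.N) :
    C.G.label n ∈ C.S ∪ { A | ∃ v ∈ varsS C.θ \ ↑C.U, A = Finsupp.single v 1 } := by
  rw [← C.hS']
  exact C.G.label_mem n

lemma label_S_of_NS {n : C.G.N} (h : C.NS n) : C.G.label n ∈ C.S := by
  rcases C.label_mem' n with h1 | h1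
  · exact h1
  · obtain ⟨v, hv, hlab⟩ := h1
    exfalso
    refine hv.2 (h v ?_)
    rw [hlab]
    simp

lemma label_single_of_not_NS {n : C.G.N} (h : ¬ C.NS n) :
    ∃ v, v ∈ varsS C.θ ∧ v ∉ C.U ∧ C.G.label n = Finsupp.single v 1 := by
  rcases C.label_mem' n with h1 | h1
  · exact absurd (fun v hv => C.hSU _ h1 v hv) h
  · obtain ⟨v, hv, hlab⟩ := h1
    exact ⟨v, hv.1, hv.2, hlab⟩

lemma chi_var {A : ℕ →₀ ℕ} {x : ℕ} : chi A (FTerm.var x : FTerm Sig ar) = A x := by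
  unfold chi
  rw [Finset.sum_eq_single x]
  · simp [FTerm.occ]
  · intro b _ hb
    simp [FTerm.occ, Ne.symm hb]
  · intro hx
    simp [Finsupp.notMem_support_iff.mp hx]

lemma chi_eq_varsF (A : ℕ →₀ ℕ) (t : FTerm Sig ar) :
    chi A t = ∑ v ∈ FTerm.varsF t, A v * FTerm.occ v t := by
  have h1 : ∑ v ∈ A.support, A v * FTerm.occ v t
      = ∑ v ∈ A.support ∪ FTerm.varsF t, A v * FTerm.occ v t :=
    Finset.sum_subset Finset.subset_union_left
      (fun v _ hv => by rw [Finsupp.notMem_support_iff.mp hv, zero_mul])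
  have h2 : ∑ v ∈ FTerm.varsF t, A v * FTerm.occ v t
      = ∑ v ∈ A.support ∪ FTerm.varsF t, A v * FTerm.occ v t :=
    Finset.sum_subset Finset.subset_union_right
      (fun v _ hv => by rw [FTerm.occ_eq_zero_of_not_mem_varsF hv, mul_zero])
  exact h1.trans h2.symm

lemma out_deg' {n : C.G.N} {x : ℕ} (hx : x ∈ domS C.θ) :
    Nat.card {e : C.G.E // C.G.layer e = x ∧ C.G.src e = n} = C.G.label n x := by
  rw [C.G.out_deg n x hx, chi_var]

lemma src_pos {e : C.G.E} : 0 < C.G.label (C.G.src e) (C.G.layer e) := by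
  rw [← C.out_deg' (C.G.layer_mem e)]
  exact natcard_pos_of_elem ⟨e, rfl, rfl⟩

lemma tgt_chi_pos {e : C.G.E} : 0 < chi (C.G.label (C.G.tgt e)) (C.θ (C.G.layer e)) := by
  rw [← C.G.in_deg _ _ (C.G.layer_mem e)]
  exact natcard_pos_of_elem ⟨e, rfl, rfl⟩

/-- Degree identity: edges of layer `x` counted by source and by target. -/
lemma F2 {x : ℕ} (hx : x ∈ domS C.θ) :
    C.B x = ∑ r ∈ FTerm.varsF (C.θ x), FTerm.occ r (C.θ x) * C.B r := by
  have h1 : ∑ n : C.G.N, Nat.card {e : C.G.E // C.G.layer e = x ∧ C.G.src e = n}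
      = ∑ n : C.G.N, Nat.card {e : C.G.E // C.G.layer e = x ∧ C.G.tgt e = n} := by
    rw [natcard_partition (fun e => C.G.layer e = x) C.G.src,
        natcard_partition (fun e => C.G.layer e = x) C.G.tgt]
  calc C.B x = ∑ n : C.G.N, C.G.label n x := C.B_apply x
    _ = ∑ n : C.G.N, Nat.card {e : C.G.E // C.G.layer e = x ∧ C.G.src e = n} :=
        Finset.sum_congr rfl fun n _ => (C.out_deg' hx).symm
    _ = ∑ n : C.G.N, Nat.card {e : C.G.E // C.G.layer e = x ∧ C.G.tgt e = n} := h1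
    _ = ∑ n : C.G.N, chi (C.G.label n) (C.θ x) :=
        Finset.sum_congr rfl fun n _ => C.G.in_deg n x hx
    _ = ∑ n : C.G.N, ∑ r ∈ FTerm.varsF (C.θ x), C.G.label n r * FTerm.occ r (C.θ x) :=
        Finset.sum_congr rfl fun n _ => chi_eq_varsF _ _
    _ = ∑ r ∈ FTerm.varsF (C.θ x), ∑ n : C.G.N, C.G.label n r * FTerm.occ r (C.θ x) :=
        Finset.sum_comm
    _ = ∑ r ∈ FTerm.varsF (C.θ x), FTerm.occ r (C.θ x) * C.B r := by
        refine Finset.sum_congr rfl fun r _ => ?_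
        rw [C.B_apply, Finset.mul_sum]
        exact Finset.sum_congr rfl fun n _ => mul_comm _ _

end Ctx

end Ctx
open Classical

lemma natcard_subtype_const {A : Type*} [Finite A] (p : Prop) :
    Nat.card {_a : A // p} = if p then Nat.card A else 0 := by
  by_cases hp : p
  · rw [if_pos hp]
    exact Nat.card_congr (Equiv.subtypeUnivEquiv (fun _ => hp))
  · rw [if_neg hp]
    have : IsEmpty {_a : A // p} := ⟨fun s => hp s.2⟩
    exact Nat.card_of_isEmpty

namespace Ctx

variable {Sig : Type} {ar : Sig → ℕ} (C : Ctx Sig ar)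

/-- Number of occurrences in `θ x`. -/
noncomputable def oLen (x : ℕ) : ℕ := (FTerm.occList (C.θ x)).length

/-- The occurrence of `θ x` with a given index. -/
noncomputable def oGet (x : ℕ) (o : Fin (C.oLen x)) : List ℕ × ℕ :=
  (FTerm.occList (C.θ x)).get o

/-- Variable at an occurrence. -/
noncomputable def vAt (x : ℕ) (o : Fin (C.oLen x)) : ℕ := (C.oGet x o).2

/-- Path of an occurrence. -/
noncomputable def pAt (x : ℕ) (o : Fin (C.oLen x)) : List ℕ := (C.oGet x o).1

lemma pAt_inj {x : ℕ} {o o' : Fin (C.oLen x)} (h : C.pAt x o = C.pAt x o') : o = o' := by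
  have hnd := FTerm.occList_paths_nodup (C.θ x)
  have hb : ∀ i : Fin (C.oLen x),
      (i : ℕ) < ((FTerm.occList (C.θ x)).map Prod.fst).length := by
    intro i; rw [List.length_map]; exact i.isLt
  have h4 : (⟨o, hb o⟩ : Fin (((FTerm.occList (C.θ x)).map Prod.fst).length))
      = ⟨o', hb o'⟩ := by
    refine (hnd.get_inj_iff (i := ⟨o, hb o⟩) (j := ⟨o', hb o'⟩)).mp ?_
    simp only [List.get_eq_getElem, List.getElem_map]
    exact h
  have h5 : (o : ℕ) = (o' : ℕ) := by injection h4
  exact Fin.ext h5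

lemma vAt_mem_varsF {x : ℕ} (o : Fin (C.oLen x)) :
    C.vAt x o ∈ FTerm.varsF (C.θ x) := by
  have hmem : C.oGet x o ∈ FTerm.occList (C.θ x) := List.get_mem _ o
  exact FTerm.occList_mem_varsF _ hmem

lemma vAt_mem_rng {x : ℕ} (hx : x ∈ domS C.θ) (o : Fin (C.oLen x)) :
    C.vAt x o ∈ rngS C.θ := by
  refine Set.mem_biUnion hx ?_
  rw [FTerm.varsT_eq_varsF]
  exact C.vAt_mem_varsF o

/-- Pairs (node, index below multiplicity): the positions of `B v`. -/
def NJ (v : ℕ) : Type := {nj : C.G.N × ℕ // nj.2 < C.G.label nj.1 v}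

def njEquiv (v : ℕ) : C.NJ v ≃ Σ n : C.G.N, Fin (C.G.label n v) where
  toFun s := ⟨s.val.1, ⟨s.val.2, s.2⟩⟩
  invFun t := ⟨(t.1, t.2.val), t.2.isLt⟩
  left_inv := by rintro ⟨⟨n, j⟩, h⟩; rfl
  right_inv := by rintro ⟨n, j⟩; rfl

instance finNJ (v : ℕ) : Finite (C.NJ v) := Finite.of_equiv _ (C.njEquiv v).symm

lemma card_NJ (v : ℕ) : Nat.card (C.NJ v) = C.B v := by
  rw [Nat.card_congr (C.njEquiv v), natcard_sigma']
  rw [C.B_apply]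
  exact Finset.sum_congr rfl fun n _ => by simp [Nat.card_eq_fintype_card]

/-- Position indexing for `B v`. -/
noncomputable def ψ (v : ℕ) : Fin (C.B v) ≃ C.NJ v :=
  equivOfNatCard _ _ (by simp [card_NJ, Nat.card_eq_fintype_card])

/-- Slots of layer `x` at node `m`. -/
def SlotP (x : ℕ) (m : C.G.N) : Type :=
  {oj : Fin (C.oLen x) × ℕ // oj.2 < C.G.label m (C.vAt x oj.1)}

def slotEquiv (x : ℕ) (m : C.G.N) :
    C.SlotP x m ≃ Σ o : Fin (C.oLen x), Fin (C.G.label m (C.vAt x o)) where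
  toFun s := ⟨s.val.1, ⟨s.val.2, s.2⟩⟩
  invFun t := ⟨(t.1, t.2.val), t.2.isLt⟩
  left_inv := by rintro ⟨⟨o, j⟩, h⟩; rfl
  right_inv := by rintro ⟨o, j⟩; rfl

instance finSlotP (x : ℕ) (m : C.G.N) : Finite (C.SlotP x m) :=
  Finite.of_equiv _ (C.slotEquiv x m).symm

lemma card_SlotP (x : ℕ) (m : C.G.N) :
    Nat.card (C.SlotP x m) = chi (C.G.label m) (C.θ x) := by
  rw [Nat.card_congr (C.slotEquiv x m), natcard_sigma']
  have h1 : ∀ o : Fin (C.oLen x),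
      Nat.card (Fin (C.G.label m (C.vAt x o))) = C.G.label m (C.vAt x o) := by
    intro o; simp [Nat.card_eq_fintype_card]
  rw [Finset.sum_congr rfl (fun o _ => h1 o)]
  have h2 : ∑ o : Fin (C.oLen x), C.G.label m (C.vAt x o)
      = ((FTerm.occList (C.θ x)).map (fun qv => C.G.label m qv.2)).sum := by
    rw [FTerm.list_sum_map]
    rfl
  rw [h2, FTerm.occList_sum, chi_eq_varsF]
  exact Finset.sum_congr rfl fun v _ => mul_comm _ _

/-- The edges of layer `x` with target `m`. -/
def TGT (x : ℕ) (m : C.G.N) : Type := {e : C.G.E // C.G.layer e = x ∧ C.G.tgt e = m}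

instance finTGT (x : ℕ) (m : C.G.N) : Finite (C.TGT x m) := by
  unfold TGT; infer_instance

/-- The assignment of edges to slots. -/
noncomputable def φ (x : ℕ) (hx : x ∈ domS C.θ) (m : C.G.N) : C.SlotP x m ≃ C.TGT x m :=
  equivOfNatCard _ _ (by rw [card_SlotP, ← C.G.in_deg m x hx]; rfl)

/-- The source node of the edge assigned to slot `(o,j)` of node `m` in layer `x`
(junk value `m` if out of range). -/
noncomputable def srcAt (x : ℕ) (hx : x ∈ domS C.θ) (m : C.G.N)
    (o : Fin (C.oLen x)) (j : ℕ) : C.G.N :=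
  if h : j < C.G.label m (C.vAt x o) then C.G.src ((C.φ x hx m) ⟨(o, j), h⟩).val else m

/-- The replacement term at occurrence `o` in layer `x`. -/
noncomputable def repl (x : ℕ) (hx : x ∈ domS C.θ) (o : Fin (C.oLen x)) : FTerm Sig ar :=
  FTerm.mk C.hsig (C.B (C.vAt x o)) (fun i =>
    FTerm.var (C.z (C.srcAt x hx ((C.ψ (C.vAt x o)) i).val.1 o ((C.ψ (C.vAt x o)) i).val.2)))

/-- The path-keyed replacement function in layer `x`. -/
noncomputable def gx (x : ℕ) (hx : x ∈ domS C.θ) (q : List ℕ) : FTerm Sig ar :=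
  if h : ∃ o : Fin (C.oLen x), C.pAt x o = q then C.repl x hx h.choose else FTerm.var 0

lemma gx_pAt (x : ℕ) (hx : x ∈ domS C.θ) (o : Fin (C.oLen x)) :
    C.gx x hx (C.pAt x o) = C.repl x hx o := by
  have h : ∃ o' : Fin (C.oLen x), C.pAt x o' = C.pAt x o := ⟨o, rfl⟩
  rw [gx, dif_pos h]
  congr 1
  exact C.pAt_inj h.choose_spec

/-- The canonical term for `u`. -/
noncomputable def canon (u : ℕ) : FTerm Sig ar :=
  FTerm.mk C.hsig (C.B u) (fun i => FTerm.var (C.z ((C.ψ u) i).val.1))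

/-- The witness substitution δ. -/
noncomputable def sub : ℕ → FTerm Sig ar := fun u =>
  if u ∈ C.U then
    (if hx : u ∈ domS C.θ then FTerm.mapOcc (C.gx u hx) [] (C.θ u) else C.canon u)
  else FTerm.var u

end Ctx
namespace FTerm

variable {Sig : Type} {ar : Sig → ℕ}

lemma mapOcc_ne_var {g : List ℕ → FTerm Sig ar} {t : FTerm Sig ar} {p : List ℕ} {y : ℕ}
    (hg : ∀ qv ∈ occList t, g (p ++ qv.1) ≠ var y) : mapOcc g p t ≠ var y := by
  cases t with
  | var v =>
      have := hg ([], v) (by simp [occList])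
      simpa [mapOcc] using this
  | app f ts => simp [mapOcc]

end FTerm

lemma restr_apply (U : Finset ℕ) (f : ℕ → ℕ) (v : ℕ) :
    restr U f v = if v ∈ U then f v else 0 := rfl

namespace Ctx

variable {Sig : Type} {ar : Sig → ℕ} (C : Ctx Sig ar)

lemma occ_var_ite (y w : ℕ) :
    FTerm.occ y (FTerm.var w : FTerm Sig ar) = if w = y then 1 else 0 := rfl

lemma occ_canon (u y : ℕ) :
    FTerm.occ y (C.canon u)
      = Nat.card {i : Fin (C.B u) // C.z ((C.ψ u) i).val.1 = y} := by
  rw [canon, FTerm.occ_mk, natcard_filter_fin]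
  refine Finset.sum_congr rfl fun i _ => ?_
  rw [occ_var_ite]
  split_ifs <;> rfl

lemma occ_repl (x : ℕ) (hx : x ∈ domS C.θ) (o : Fin (C.oLen x)) (y : ℕ) :
    FTerm.occ y (C.repl x hx o)
      = Nat.card {i : Fin (C.B (C.vAt x o)) //
          C.z (C.srcAt x hx ((C.ψ (C.vAt x o)) i).val.1 o ((C.ψ (C.vAt x o)) i).val.2) = y} := by
  rw [repl, FTerm.occ_mk, natcard_filter_fin]
  refine Finset.sum_congr rfl fun i _ => ?_
  rw [occ_var_ite]
  split_ifs <;> rfl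

lemma occ_canon_z (u : ℕ) (n : C.G.N) :
    FTerm.occ (C.z n) (C.canon u) = C.G.label n u := by
  rw [occ_canon]
  rw [Nat.card_congr (Equiv.subtypeEquivRight
    (fun i => ⟨fun h => C.z_inj h, fun h => congrArg C.z h⟩))]
  rw [natcard_fiber_equiv (C.ψ u) (fun s => s.val.1 = n)]
  rw [← natcard_fiber_equiv ((C.njEquiv u).symm) (fun s => s.val.1 = n)]
  have : ∀ t : Σ n' : C.G.N, Fin (C.G.label n' u),
      (((C.njEquiv u).symm t).val.1 = n) = (t.1 = n) := fun t => rfl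
  rw [natcard_sigma_subtype _ (fun t => ((C.njEquiv u).symm t).val.1 = n)]
  have hstep : ∀ m : C.G.N,
      Nat.card {j : Fin (C.G.label m u) // (((C.njEquiv u).symm ⟨m, j⟩)).val.1 = n}
        = Nat.card {_j : Fin (C.G.label m u) // m = n} := fun m =>
    Nat.card_congr (Equiv.subtypeEquivRight (fun j => Iff.rfl))
  rw [Finset.sum_congr rfl (fun m _ => (hstep m).trans
    (natcard_subtype_const (A := Fin (C.G.label m u)) (m = n)))]
  rw [Finset.sum_ite_eq' Finset.univ n (fun m => Nat.card (Fin (C.G.label m u)))]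
  simp [Nat.card_eq_fintype_card]

lemma occ_canon_nz (u y : ℕ) (hy : ∀ n, C.z n ≠ y) :
    FTerm.occ y (C.canon u) = 0 := by
  rw [occ_canon]
  have : IsEmpty {i : Fin (C.B u) // C.z ((C.ψ u) i).val.1 = y} :=
    ⟨fun s => hy _ s.2⟩
  exact Nat.card_of_isEmpty

lemma occ_repl_nz (x : ℕ) (hx : x ∈ domS C.θ) (o : Fin (C.oLen x)) (y : ℕ)
    (hy : ∀ n, C.z n ≠ y) : FTerm.occ y (C.repl x hx o) = 0 := by
  rw [occ_repl]
  have : IsEmpty {i : Fin (C.B (C.vAt x o)) //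
      C.z (C.srcAt x hx ((C.ψ (C.vAt x o)) i).val.1 o ((C.ψ (C.vAt x o)) i).val.2) = y} :=
    ⟨fun s => hy _ s.2⟩
  exact Nat.card_of_isEmpty

lemma sum_repl_z (x : ℕ) (hx : x ∈ domS C.θ) (n : C.G.N) :
    ∑ o : Fin (C.oLen x), FTerm.occ (C.z n) (C.repl x hx o) = C.G.label n x := by
  have step1 : ∀ o : Fin (C.oLen x),
      FTerm.occ (C.z n) (C.repl x hx o)
        = ∑ m : C.G.N, Nat.card {j : Fin (C.G.label m (C.vAt x o)) //
            C.srcAt x hx m o j.val = n} := by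
    intro o
    rw [occ_repl]
    rw [Nat.card_congr (Equiv.subtypeEquivRight
      (fun i => ⟨fun h => C.z_inj h, fun h => congrArg C.z h⟩))]
    rw [natcard_fiber_equiv (C.ψ (C.vAt x o))
      (fun s => C.srcAt x hx s.val.1 o s.val.2 = n)]
    rw [← natcard_fiber_equiv ((C.njEquiv (C.vAt x o)).symm)
      (fun s => C.srcAt x hx s.val.1 o s.val.2 = n)]
    rw [natcard_sigma_subtype _
      (fun t => C.srcAt x hx ((C.njEquiv (C.vAt x o)).symm t).val.1 o
        ((C.njEquiv (C.vAt x o)).symm t).val.2 = n)]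
    exact Finset.sum_congr rfl fun m _ =>
      Nat.card_congr (Equiv.subtypeEquivRight (fun j => Iff.rfl))
  have step2 : ∀ m : C.G.N, ∀ o : Fin (C.oLen x),
      Nat.card {j : Fin (C.G.label m (C.vAt x o)) // C.srcAt x hx m o j.val = n}
        = Nat.card {j : Fin (C.G.label m (C.vAt x o)) //
            C.G.src ((C.φ x hx m) ((C.slotEquiv x m).symm ⟨o, j⟩)).val = n} := by
    intro m o
    refine Nat.card_congr (Equiv.subtypeEquivRight (fun j => ?_))
    rw [srcAt, dif_pos j.isLt]
    rfl
  calc ∑ o : Fin (C.oLen x), FTerm.occ (C.z n) (C.repl x hx o)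
      = ∑ o : Fin (C.oLen x), ∑ m : C.G.N,
          Nat.card {j : Fin (C.G.label m (C.vAt x o)) // C.srcAt x hx m o j.val = n} :=
        Finset.sum_congr rfl fun o _ => step1 o
    _ = ∑ m : C.G.N, ∑ o : Fin (C.oLen x),
          Nat.card {j : Fin (C.G.label m (C.vAt x o)) // C.srcAt x hx m o j.val = n} :=
        Finset.sum_comm
    _ = ∑ m : C.G.N, Nat.card {s : C.SlotP x m // C.G.src ((C.φ x hx m) s).val = n} := by
        refine Finset.sum_congr rfl fun m _ => ?_
        rw [← natcard_fiber_equiv ((C.slotEquiv x m).symm)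
          (fun s => C.G.src ((C.φ x hx m) s).val = n)]
        rw [natcard_sigma_subtype _
          (fun t => C.G.src ((C.φ x hx m) ((C.slotEquiv x m).symm t)).val = n)]
        exact Finset.sum_congr rfl fun o _ => step2 m o
    _ = ∑ m : C.G.N, Nat.card {e : C.TGT x m // C.G.src e.val = n} := by
        refine Finset.sum_congr rfl fun m _ => ?_
        exact natcard_fiber_equiv (C.φ x hx m) (fun e => C.G.src e.val = n)
    _ = ∑ m : C.G.N, Nat.card {e : C.G.E //
          (C.G.layer e = x ∧ C.G.src e = n) ∧ C.G.tgt e = m} := by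
        refine Finset.sum_congr rfl fun m _ => ?_
        exact Nat.card_congr ((Equiv.subtypeSubtypeEquivSubtypeInter
          (fun e => C.G.layer e = x ∧ C.G.tgt e = m) (fun e => C.G.src e = n)).trans
          (Equiv.subtypeEquivRight (fun e => by tauto)))
    _ = Nat.card {e : C.G.E // C.G.layer e = x ∧ C.G.src e = n} :=
        natcard_partition _ C.G.tgt
    _ = C.G.label n x := C.out_deg' hx

lemma occ_sub_dom (u : ℕ) (hu : u ∈ C.U) (hx : u ∈ domS C.θ) (y : ℕ) :
    FTerm.occ y (C.sub u) = ∑ o : Fin (C.oLen u), FTerm.occ y (C.repl u hx o) := by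
  rw [sub, if_pos hu, dif_pos hx, FTerm.occ_mapOcc, FTerm.list_sum_map]
  refine Finset.sum_congr rfl fun o _ => ?_
  show FTerm.occ y (C.gx u hx ([] ++ (C.pAt u o))) = _
  rw [List.nil_append, C.gx_pAt u hx o]

lemma occ_sub_z (u : ℕ) (hu : u ∈ C.U) (n : C.G.N) :
    FTerm.occ (C.z n) (C.sub u) = C.G.label n u := by
  by_cases hx : u ∈ domS C.θ
  · rw [C.occ_sub_dom u hu hx, C.sum_repl_z u hx]
  · rw [sub, if_pos hu, dif_neg hx, C.occ_canon_z]

lemma occ_sub_nz (u : ℕ) (hu : u ∈ C.U) (y : ℕ) (hy : ∀ n, C.z n ≠ y) :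
    FTerm.occ y (C.sub u) = 0 := by
  by_cases hx : u ∈ domS C.θ
  · rw [C.occ_sub_dom u hu hx]
    exact Finset.sum_eq_zero fun o _ => C.occ_repl_nz u hx o y hy
  · rw [sub, if_pos hu, dif_neg hx]
    exact C.occ_canon_nz u y hy

lemma restr_col (y : ℕ) : restr C.U (invSub C.sub y) ∈ C.S := by
  by_cases hz : ∃ n, C.z n = y
  · obtain ⟨n, rfl⟩ := hz
    by_cases hNS : C.NS n
    · have : restr C.U (invSub C.sub (C.z n)) = C.G.label n := by
        ext v
        rw [restr_apply]
        by_cases hv : v ∈ C.U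
        · rw [if_pos hv]
          exact C.occ_sub_z v hv n
        · rw [if_neg hv]
          by_contra hc
          exact hv (hNS v (Finsupp.mem_support_iff.mpr (fun h => hc h.symm)))
      rw [this]
      exact C.label_S_of_NS hNS
    · obtain ⟨v₀, _, hv₀U, hlab⟩ := C.label_single_of_not_NS hNS
      have : restr C.U (invSub C.sub (C.z n)) = 0 := by
        ext v
        rw [restr_apply]
        by_cases hv : v ∈ C.U
        · rw [if_pos hv, invSub, C.occ_sub_z v hv n, hlab]
          exact Finsupp.single_eq_of_ne (fun h => hv₀U (h ▸ hv))
        · rw [if_neg hv]; rfl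
      rw [this]
      exact C.hS0
  · push_neg at hz
    have : restr C.U (invSub C.sub y) = 0 := by
      ext v
      rw [restr_apply]
      by_cases hv : v ∈ C.U
      · rw [if_pos hv]
        exact C.occ_sub_nz v hv y hz
      · rw [if_neg hv]; rfl
    rw [this]
    exact C.hS0

lemma sub_ne_var (u : ℕ) (hu : u ∈ C.U) (y : ℕ) : C.sub u ≠ FTerm.var y := by
  rw [sub, if_pos hu]
  by_cases hx : u ∈ domS C.θ
  · rw [dif_pos hx]
    refine FTerm.mapOcc_ne_var (fun qv hqv => ?_)
    obtain ⟨o, ho⟩ := List.get_of_mem hqv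
    have : ([] : List ℕ) ++ qv.1 = C.pAt u o := by
      rw [List.nil_append, ← ho]; rfl
    rw [this, C.gx_pAt u hx o]
    exact FTerm.mk_ne_var C.hsig _ _ y
  · rw [dif_neg hx]
    exact FTerm.mk_ne_var C.hsig _ _ y

lemma sub_not_U {u : ℕ} (hu : u ∉ C.U) : C.sub u = FTerm.var u := by
  rw [sub, if_neg hu]

lemma domS_sub : domS C.sub = ↑C.U := by
  ext u
  simp only [domS, Set.mem_setOf_eq, Finset.mem_coe]
  constructor
  · intro h
    by_contra hu
    exact h (C.sub_not_U hu)
  · intro hu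
    exact C.sub_ne_var u hu u

lemma projS_sub : projS C.U C.sub = C.sub := by
  funext u
  rw [projS]
  by_cases hu : u ∈ C.U
  · rw [if_pos hu]
  · rw [if_neg hu, C.sub_not_U hu]

lemma rngS_sub_z {y : ℕ} (h : y ∈ rngS C.sub) : ∃ n, C.z n = y := by
  obtain ⟨x, hx, hy⟩ := Set.mem_iUnion₂.mp h
  have hx' : x ∈ C.U := by rw [domS_sub] at hx; exact hx
  by_contra hc
  push_neg at hc
  exact hy (C.occ_sub_nz x hx' y hc)

lemma idem_sub : Idem C.sub := by
  rw [Idem, Set.eq_empty_iff_forall_notMem]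
  rintro y ⟨hd, hr⟩
  obtain ⟨n, rfl⟩ := C.rngS_sub_z hr
  rw [domS_sub] at hd
  exact C.z_not_U n hd

end Ctx
namespace FTerm

variable {Sig : Type} {ar : Sig → ℕ}

lemma exists_occ {t : FTerm Sig ar} {v : ℕ} (h : v ∈ varsF t) :
    ∃ qv ∈ occList t, qv.2 = v := by
  induction t with
  | var w =>
      simp [varsF] at h
      exact ⟨([], w), by simp [occList], h.symm⟩
  | app f ts ih =>
      simp only [varsF, Finset.mem_biUnion, Finset.mem_univ, true_and] at h
      obtain ⟨i, hi⟩ := h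
      obtain ⟨qv, hqv, hv⟩ := ih i hi
      refine ⟨(i.val :: qv.1, qv.2), ?_, hv⟩
      simp only [occList, List.mem_flatMap, List.mem_map]
      exact ⟨i, List.mem_finRange i, qv, hqv, rfl⟩

lemma subst_eq_mapOcc {σ : ℕ → FTerm Sig ar} {g : List ℕ → FTerm Sig ar}
    {t : FTerm Sig ar} {p : List ℕ}
    (h : ∀ qv ∈ occList t, g (p ++ qv.1) = σ qv.2) : mapOcc g p t = subst σ t := by
  induction t generalizing p with
  | var v =>
      show g p = σ v
      have := h ([], v) (by simp [occList])
      simpa using this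
  | app f ts ih =>
      show FTerm.app f _ = FTerm.app f _
      congr 1
      funext i
      refine ih i (fun qv hqv => ?_)
      have := h (i.val :: qv.1, qv.2) (by
        simp only [occList, List.mem_flatMap, List.mem_map]
        exact ⟨i, List.mem_finRange i, qv, hqv, rfl⟩)
      simpa [List.append_assoc] using this

lemma mk_inj' (hsig : ∀ k : ℕ, ∃ f : Sig, ar f = k) {k k' : ℕ}
    {a : Fin k → FTerm Sig ar} {b : Fin k' → FTerm Sig ar} (hk : k = k')
    (h : mk hsig k a = mk hsig k' b) : ∀ i : Fin k, a i = b (Fin.cast hk i) := by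
  subst hk
  exact mk_inj hsig h

end FTerm

lemma chi_single {Sig : Type} {ar : Sig → ℕ} (v : ℕ) (t : FTerm Sig ar) :
    chi (Finsupp.single v 1) t = FTerm.occ v t := by
  unfold chi
  rw [Finsupp.support_single_ne_zero v one_ne_zero]
  simp

namespace Ctx

variable {Sig : Type} {ar : Sig → ℕ} (C : Ctx Sig ar)

/-- `v` occurs in a `U`-layer. -/
def Cv (v : ℕ) : Prop := ∃ x, x ∈ domS C.θ ∧ x ∈ C.U ∧ v ∈ FTerm.varsF (C.θ x)

lemma Cv_rng {v : ℕ} (h : C.Cv v) : v ∈ rngS C.θ := by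
  obtain ⟨x, hx, _, hv⟩ := h
  refine Set.mem_biUnion hx ?_
  rw [FTerm.varsT_eq_varsF]
  exact hv

/-- The unifier η, parameterized by the collapse variable `w`, off the domain of θ. -/
noncomputable def eta0 (w : ℕ) : ℕ → FTerm Sig ar := fun v =>
  if ∃ n, C.NS n ∧ C.z n = v then FTerm.var w
  else if v ∈ C.U ∨ C.Cv v then FTerm.mk C.hsig (C.B v) (fun _ => FTerm.var w)
  else FTerm.var v

/-- The unifier η. -/
noncomputable def eta (w : ℕ) : ℕ → FTerm Sig ar := fun y =>
  if y ∈ domS C.θ then FTerm.subst (C.eta0 w) (C.θ y) else C.eta0 w y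

lemma eta0_z {w : ℕ} {n : C.G.N} (h : C.NS n) : C.eta0 w (C.z n) = FTerm.var w := by
  rw [eta0, if_pos ⟨n, h, rfl⟩]

lemma eta0_mk {w v : ℕ} (hv : v ∈ C.U ∨ C.Cv v) (hnz : ∀ n, C.z n ≠ v) :
    C.eta0 w v = FTerm.mk C.hsig (C.B v) (fun _ => FTerm.var w) := by
  rw [eta0, if_neg (fun ⟨n, _, hzn⟩ => hnz n hzn), if_pos hv]

lemma eta0_var {w v : ℕ} (h1 : ¬ ∃ n, C.NS n ∧ C.z n = v) (h2 : ¬ (v ∈ C.U ∨ C.Cv v)) :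
    C.eta0 w v = FTerm.var v := by
  rw [eta0, if_neg h1, if_neg h2]

lemma not_z_of_U {v : ℕ} (h : v ∈ C.U) : ∀ n, C.z n ≠ v :=
  fun n hn => C.z_not_U n (hn ▸ h)

lemma not_z_of_rng {v : ℕ} (h : v ∈ rngS C.θ) : ∀ n, C.z n ≠ v :=
  fun n hn => C.z_not_rng n (hn ▸ h)

/-- Structural: sources of `U`-layer edges are `NS` nodes. -/
lemma NS_of_layer_U {e : C.G.E} (h : C.G.layer e ∈ C.U) : C.NS (C.G.src e) := by
  by_contra hns
  obtain ⟨v₀, _, hv₀U, hlab⟩ := C.label_single_of_not_NS hns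
  have hpos := C.src_pos (e := e)
  rw [hlab] at hpos
  rcases eq_or_ne v₀ (C.G.layer e) with hv | hv
  · exact hv₀U (hv ▸ h)
  · rw [Finsupp.single_eq_of_ne' hv] at hpos
    exact absurd hpos (by omega)

lemma not_NS_of_layer_not_U {e : C.G.E} (h : C.G.layer e ∉ C.U) : ¬ C.NS (C.G.src e) := by
  intro hns
  have hpos := C.src_pos (e := e)
  exact h (hns _ (Finsupp.mem_support_iff.mpr (by omega)))

/-- The label variable of a non-NS node. -/
lemma single_node_var {n : C.G.N} {v : ℕ} (hlab : C.G.label n = Finsupp.single v 1) :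
    ∀ y, 0 < C.G.label n y → y = v := by
  intro y hy
  rw [hlab] at hy
  by_contra hne
  rw [Finsupp.single_eq_of_ne' (Ne.symm hne)] at hy
  omega

/-- Leaf nodes (label `single x` with `x ∈ dom θ`) have no in-edges. -/
lemma leaf_no_in {n : C.G.N} {x : ℕ} (hlab : C.G.label n = Finsupp.single x 1)
    (hx : x ∈ domS C.θ) : ∀ e : C.G.E, C.G.tgt e ≠ n := by
  intro e he
  have h1 : Nat.card {e' : C.G.E // C.G.layer e' = C.G.layer e ∧ C.G.tgt e' = n} = 0 := by
    rw [C.G.in_deg n _ (C.G.layer_mem e), hlab, chi_single, C.occ_dom_rng hx (C.G.layer_mem e)]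
  have h2 : 0 < Nat.card {e' : C.G.E // C.G.layer e' = C.G.layer e ∧ C.G.tgt e' = n} :=
    natcard_pos_of_elem ⟨e, rfl, he⟩
  omega

/-- Center nodes (label `single v` with `v ∉ dom θ`) have no out-edges. -/
lemma center_no_out {n : C.G.N} {v : ℕ} (hlab : C.G.label n = Finsupp.single v 1)
    (hv : v ∉ domS C.θ) : ∀ e : C.G.E, C.G.src e ≠ n := by
  intro e he
  have hpos := C.src_pos (e := e)
  rw [he, hlab] at hpos
  have : C.G.layer e = v := by
    by_contra hne
    rw [Finsupp.single_eq_of_ne' (fun h => hne h.symm)] at hpos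
    omega
  exact hv (this ▸ C.G.layer_mem e)

/-- A leaf's out-edges all lie in its own layer. -/
lemma leaf_out_layer {n : C.G.N} {x : ℕ} (hlab : C.G.label n = Finsupp.single x 1) :
    ∀ e : C.G.E, C.G.src e = n → C.G.layer e = x := by
  intro e he
  have hpos := C.src_pos (e := e)
  rw [he] at hpos
  exact C.single_node_var hlab _ hpos

/-- A leaf has a unique out-edge. -/
lemma leaf_out_unique {n : C.G.N} {x : ℕ} (hlab : C.G.label n = Finsupp.single x 1)
    (hx : x ∈ domS C.θ) :
    ∀ e e' : C.G.E, C.G.src e = n → C.G.src e' = n → e = e' := by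
  intro e e' he he'
  have hcard : Nat.card {e'' : C.G.E // C.G.layer e'' = x ∧ C.G.src e'' = n} = 1 := by
    rw [C.out_deg' hx, hlab, Finsupp.single_eq_same]
  obtain ⟨hsub, _⟩ := (Nat.card_eq_one_iff_unique).mp hcard
  have h1 : (⟨e, C.leaf_out_layer hlab e he, he⟩ :
      {e'' : C.G.E // C.G.layer e'' = x ∧ C.G.src e'' = n})
      = ⟨e', C.leaf_out_layer hlab e' he', he'⟩ := Subsingleton.elim _ _
  exact congrArg Subtype.val h1

lemma B_outside {y : ℕ} (hU : y ∉ C.U) (hv : y ∉ varsS C.θ) : C.B y = 0 := by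
  rw [B_apply]
  refine Finset.sum_eq_zero fun n _ => ?_
  by_cases hns : C.NS n
  · by_contra hc
    exact hU (hns y (Finsupp.mem_support_iff.mpr hc))
  · obtain ⟨v₀, hv₀, _, hlab⟩ := C.label_single_of_not_NS hns
    rw [hlab]
    exact Finsupp.single_eq_of_ne (fun h => hv (h ▸ hv₀))

end Ctx
namespace Ctx

variable {Sig : Type} {ar : Sig → ℕ} (C : Ctx Sig ar)

lemma NS_of_label_U {m : C.G.N} {u : ℕ} (h : 0 < C.G.label m u) (hu : u ∈ C.U) :
    C.NS m := by
  by_contra hns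
  obtain ⟨v₀, _, hv₀U, hlab⟩ := C.label_single_of_not_NS hns
  exact hv₀U ((C.single_node_var hlab u h) ▸ hu)

lemma srcAt_eq (x : ℕ) (hx : x ∈ domS C.θ) (m : C.G.N) (o : Fin (C.oLen x)) (j : ℕ)
    (h : j < C.G.label m (C.vAt x o)) :
    C.srcAt x hx m o j = C.G.src ((C.φ x hx m) ⟨(o, j), h⟩).val := dif_pos h

lemma srcAt_NS {x : ℕ} (hx : x ∈ domS C.θ) (hxU : x ∈ C.U) (m : C.G.N)
    (o : Fin (C.oLen x)) (j : ℕ) (h : j < C.G.label m (C.vAt x o)) :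
    C.NS (C.srcAt x hx m o j) := by
  rw [C.srcAt_eq x hx m o j h]
  exact C.NS_of_layer_U (((C.φ x hx m) ⟨(o, j), h⟩).2.1.symm ▸ hxU)

lemma eta_not_dom {w y : ℕ} (h : y ∉ domS C.θ) : C.eta w y = C.eta0 w y := if_neg h

lemma eta_z {w : ℕ} {n : C.G.N} (h : C.NS n) : C.eta w (C.z n) = FTerm.var w := by
  rw [C.eta_not_dom (C.z_not_dom n), C.eta0_z h]

lemma eta_dom {w y : ℕ} (h : y ∈ domS C.θ) :
    C.eta w y = FTerm.subst (C.eta0 w) (C.θ y) := if_pos h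

/-- η unifies the equations. -/
lemma unifies_eta (w : ℕ) : Unifies (C.eta w) (EqSet C.sub ∪ EqSet C.θ) := by
  rintro p (⟨u, hu, rfl⟩ | ⟨x, hx, rfl⟩)
  · have huU : u ∈ C.U := by
      have := C.domS_sub ▸ hu
      exact this
    show C.eta w u = FTerm.subst (C.eta w) (C.sub u)
    by_cases hx : u ∈ domS C.θ
    · rw [C.eta_dom hx, sub, if_pos huU, dif_pos hx, FTerm.subst_mapOcc]
      refine (FTerm.subst_eq_mapOcc (fun qv hqv => ?_)).symm
      obtain ⟨o, ho⟩ := List.get_of_mem hqv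
      change Fin (C.oLen u) at o
      subst ho
      show FTerm.subst (C.eta w) (C.gx u hx ([] ++ C.pAt u o)) = C.eta0 w (C.vAt u o)
      rw [List.nil_append, C.gx_pAt u hx o, repl, FTerm.subst_mk]
      rw [C.eta0_mk (Or.inr ⟨u, hx, huU, C.vAt_mem_varsF o⟩)
        (C.not_z_of_rng (C.vAt_mem_rng hx o))]
      refine congrArg (FTerm.mk C.hsig (C.B (C.vAt u o))) (funext fun i => ?_)
      show C.eta w (C.z (C.srcAt u hx _ o _)) = FTerm.var w
      exact C.eta_z (C.srcAt_NS hx huU _ o _ ((C.ψ (C.vAt u o)) i).2)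
    · rw [C.eta_not_dom hx, sub, if_pos huU, dif_neg hx, canon, FTerm.subst_mk]
      rw [C.eta0_mk (Or.inl huU) (C.not_z_of_U huU)]
      refine congrArg (FTerm.mk C.hsig (C.B u)) (funext fun i => ?_)
      show FTerm.var w = C.eta w (C.z ((C.ψ u) i).val.1)
      exact (C.eta_z (C.NS_of_label_U (by have := ((C.ψ u) i).2; omega) huU)).symm
  · show C.eta w x = FTerm.subst (C.eta w) (C.θ x)
    rw [C.eta_dom hx]
    refine (FTerm.subst_congr (fun v hv => ?_)).symm
    have hvr : v ∈ rngS C.θ := by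
      refine Set.mem_biUnion hx ?_
      rw [FTerm.varsT_eq_varsF]
      exact hv
    exact C.eta_not_dom (C.not_domS_of_rngS hvr)

section Forced

variable (τ : ℕ → FTerm Sig ar)
variable (hτ1 : ∀ u ∈ C.U, τ u = FTerm.subst τ (C.sub u))
variable (hτ2 : ∀ x ∈ domS C.θ, τ x = FTerm.subst τ (C.θ x))

include hτ1 in
lemma canon_eq {u : ℕ} (hu : u ∈ C.U) (hud : u ∉ domS C.θ) :
    τ u = FTerm.mk C.hsig (C.B u) (fun i => τ (C.z ((C.ψ u) i).val.1)) := by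
  have := hτ1 u hu
  rwa [sub, if_pos hu, dif_neg hud, canon, FTerm.subst_mk] at this

include hτ1 hτ2 in
lemma occ_eq {x : ℕ} (hx : x ∈ domS C.θ) (hxU : x ∈ C.U) (o : Fin (C.oLen x)) :
    τ (C.vAt x o) = FTerm.mk C.hsig (C.B (C.vAt x o)) (fun i =>
      τ (C.z (C.srcAt x hx ((C.ψ (C.vAt x o)) i).val.1 o ((C.ψ (C.vAt x o)) i).val.2))) := by
  have h0 : FTerm.subst τ (FTerm.mapOcc (C.gx x hx) [] (C.θ x)) = FTerm.subst τ (C.θ x) := by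
    have h1 := hτ1 x hxU
    rw [sub, if_pos hxU, dif_pos hx] at h1
    rw [← h1, ← hτ2 x hx]
  have h1 := FTerm.mapOcc_decomp h0 (C.oGet x o) (List.get_mem _ o)
  rw [List.nil_append] at h1
  have h2 : C.gx x hx (C.oGet x o).1 = C.repl x hx o := C.gx_pAt x hx o
  rw [h2, repl, FTerm.subst_mk] at h1
  exact h1.symm

include hτ1 hτ2 in
lemma derA {e : C.G.E} (hU : C.G.layer e ∈ C.U) (hNS : C.NS (C.G.tgt e)) :
    τ (C.z (C.G.src e)) = τ (C.z (C.G.tgt e)) := by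
  have hx : C.G.layer e ∈ domS C.θ := C.G.layer_mem e
  set x := C.G.layer e with hxdef
  set m := C.G.tgt e with hmdef
  set s := (C.φ x hx m).symm ⟨e, rfl, rfl⟩ with hsdef
  set o : Fin (C.oLen x) := s.val.1 with hodef
  set j : ℕ := s.val.2 with hjdef
  have hj : j < C.G.label m (C.vAt x o) := s.2
  set v := C.vAt x o with hvdef
  have hvU : v ∈ C.U := hNS v (Finsupp.mem_support_iff.mpr
    (Nat.pos_iff_ne_zero.mp (lt_of_le_of_lt (Nat.zero_le j) hj)))
  have hvrng : v ∈ rngS C.θ := C.vAt_mem_rng hx o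
  have h1 := C.canon_eq τ hτ1 hvU (C.not_domS_of_rngS hvrng)
  have h2 := C.occ_eq τ hτ1 hτ2 hx hU o
  have h3 := FTerm.mk_inj C.hsig (h1.symm.trans h2)
  have h4 := h3 ((C.ψ v).symm ⟨(m, j), hj⟩)
  rw [show (C.ψ v) ((C.ψ v).symm ⟨(m, j), hj⟩) = ⟨(m, j), hj⟩ from (C.ψ v).apply_symm_apply _] at h4
  have h5 : C.srcAt x hx m o j = C.G.src e := by
    rw [C.srcAt_eq x hx m o j hj]
    have : (⟨(o, j), hj⟩ : C.SlotP x m) = s := rfl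
    rw [this, hsdef]
    exact congrArg (fun t : C.TGT x m => C.G.src t.val) ((C.φ x hx m).apply_symm_apply _)
  rw [h5] at h4
  exact h4.symm

include hτ1 hτ2 in
lemma derB {e e' : C.G.E} (hU : C.G.layer e ∈ C.U) (hU' : C.G.layer e' ∈ C.U)
    (htgt : C.G.tgt e = C.G.tgt e') (hNS : ¬ C.NS (C.G.tgt e)) :
    τ (C.z (C.G.src e)) = τ (C.z (C.G.src e')) := by
  obtain ⟨v₀, _, hv₀U, hlab⟩ := C.label_single_of_not_NS hNS
  have hx : C.G.layer e ∈ domS C.θ := C.G.layer_mem e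
  have hx' : C.G.layer e' ∈ domS C.θ := C.G.layer_mem e'
  set x := C.G.layer e with hxdef
  set x' := C.G.layer e' with hxdef'
  set m := C.G.tgt e with hmdef
  set s := (C.φ x hx m).symm ⟨e, rfl, rfl⟩ with hsdef
  set s' := (C.φ x' hx' m).symm ⟨e', rfl, htgt.symm⟩ with hsdef'
  set o : Fin (C.oLen x) := s.val.1 with hodef
  set o' : Fin (C.oLen x') := s'.val.1 with hodef'
  have hj : s.val.2 < C.G.label m (C.vAt x o) := s.2
  have hj' : s'.val.2 < C.G.label m (C.vAt x' o') := s'.2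
  -- the variables at both occurrences are v₀, and the slot indices are 0
  have hp1 : 0 < C.G.label m (C.vAt x o) := lt_of_le_of_lt (Nat.zero_le _) hj
  have hp2 : 0 < C.G.label m (C.vAt x' o') := lt_of_le_of_lt (Nat.zero_le _) hj'
  have hv1 : C.vAt x o = v₀ := C.single_node_var hlab _ hp1
  have hv2 : C.vAt x' o' = v₀ := C.single_node_var hlab _ hp2
  have hl1 : C.G.label m (C.vAt x o) = 1 := by rw [hlab, hv1, Finsupp.single_eq_same]
  have hl2 : C.G.label m (C.vAt x' o') = 1 := by rw [hlab, hv2, Finsupp.single_eq_same]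
  have hjz : s.val.2 = 0 := by omega
  have hjz' : s'.val.2 = 0 := by omega
  have h5 : C.srcAt x hx m o 0 = C.G.src e := by
    rw [C.srcAt_eq x hx m o 0 hp1]
    congr 1
    have : (⟨(o, 0), hp1⟩ : C.SlotP x m) = s := by
      rw [hsdef]
      refine Subtype.ext ?_
      rw [← hsdef]
      exact Prod.ext rfl hjz.symm
    rw [this, hsdef]
    exact congrArg Subtype.val ((C.φ x hx m).apply_symm_apply _)
  have h5' : C.srcAt x' hx' m o' 0 = C.G.src e' := by
    rw [C.srcAt_eq x' hx' m o' 0 hp2]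
    congr 1
    have : (⟨(o', 0), hp2⟩ : C.SlotP x' m) = s' := by
      rw [hsdef']
      refine Subtype.ext ?_
      rw [← hsdef']
      exact Prod.ext rfl hjz'.symm
    rw [this, hsdef']
    exact congrArg Subtype.val ((C.φ x' hx' m).apply_symm_apply _)
  have h2 := C.occ_eq τ hτ1 hτ2 hx hU o
  have h2' := C.occ_eq τ hτ1 hτ2 hx' hU' o'
  rw [hv1] at h2
  rw [hv2] at h2'
  have h3 := FTerm.mk_inj C.hsig (h2.symm.trans h2')
  have hlv : 0 < C.G.label m v₀ := by rw [hlab, Finsupp.single_eq_same]; omega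
  have h4 := h3 ((C.ψ v₀).symm ⟨(m, 0), hlv⟩)
  rw [show (C.ψ v₀) ((C.ψ v₀).symm ⟨(m, 0), hlv⟩) = ⟨(m, 0), hlv⟩ from (C.ψ v₀).apply_symm_apply _] at h4
  rw [h5, h5'] at h4
  exact h4

end Forced

end Ctx
namespace Ctx

variable {Sig : Type} {ar : Sig → ℕ} (C : Ctx Sig ar)

/-- Adjacency in the flattened multigraph. -/
def Adj (a b : C.G.N) : Prop :=
  ∃ e : C.G.E, (C.G.src e = a ∧ C.G.tgt e = b) ∨ (C.G.src e = b ∧ C.G.tgt e = a)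

lemma conn' (a b : C.G.N) : Relation.ReflTransGen C.Adj a b := C.G.conn a b

lemma NS_mem_support {n : C.G.N} {v : ℕ} (h : C.NS n) (hv : 0 < C.G.label n v) :
    v ∈ C.U := h v (Finsupp.mem_support_iff.mpr (Nat.pos_iff_ne_zero.mp hv))

/-- The star lemma: if a center `m` has no `U`-layer in-edge then everything
reachable from `m` is `m` itself or a leaf pointing into `m`. -/
lemma star_reach {m : C.G.N} {v : ℕ} (hlab : C.G.label m = Finsupp.single v 1)
    (hvd : v ∉ domS C.θ)
    (hnoU : ∀ e : C.G.E, C.G.tgt e = m → C.G.layer e ∉ C.U) :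
    ∀ b, Relation.ReflTransGen C.Adj m b →
      b = m ∨ (∃ x, C.G.label b = Finsupp.single x 1 ∧ x ∈ domS C.θ ∧ x ∉ C.U ∧
        ∀ e : C.G.E, C.G.src e = b → C.G.tgt e = m) := by
  intro b hreach
  induction hreach with
  | refl => exact Or.inl rfl
  | @tail b' c hsteps hadj ih =>
      obtain ⟨e, he⟩ := hadj
      rcases ih with rfl | ⟨x, hlabb, hxd, hxU, hall⟩
      · rcases he with ⟨hsrc, htgt⟩ | ⟨hsrc, htgt⟩
        · exact absurd hsrc (C.center_no_out hlab hvd e)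
        · -- e : src = c, tgt = m
          have hlayU : C.G.layer e ∉ C.U := hnoU e htgt
          have hns : ¬ C.NS c := hsrc ▸ C.not_NS_of_layer_not_U hlayU
          obtain ⟨y, hy, hyU, hlabc⟩ := C.label_single_of_not_NS hns
          have hy2 : y = C.G.layer e := by
            have hpos := C.src_pos (e := e)
            rw [hsrc] at hpos
            exact (C.single_node_var hlabc _ hpos).symm
          have hyd : y ∈ domS C.θ := hy2 ▸ C.G.layer_mem e
          refine Or.inr ⟨y, hlabc, hyd, hy2 ▸ hlayU, fun e' he' => ?_⟩
          rw [C.leaf_out_unique hlabc hyd e' e he' hsrc, htgt]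
      · rcases he with ⟨hsrc, htgt⟩ | ⟨hsrc, htgt⟩
        · exact Or.inl (htgt.symm.trans (hall e hsrc))
        · exact absurd htgt (C.leaf_no_in hlabb hxd e)

/-- In presence of an NS node, every center has a `U`-layer in-edge. -/
lemma center_has_U_edge (hNSex : ∃ n₀, C.NS n₀) {m : C.G.N} {v : ℕ}
    (hlab : C.G.label m = Finsupp.single v 1) (hvU : v ∉ C.U) (hvd : v ∉ domS C.θ) :
    ∃ e : C.G.E, C.G.tgt e = m ∧ C.G.layer e ∈ C.U := by
  by_contra h
  push_neg at h
  obtain ⟨n₀, hn₀⟩ := hNSex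
  rcases C.star_reach hlab hvd h n₀ (C.conn' m n₀) with rfl | ⟨x, hlabb, _, hxU, _⟩
  · refine hvU (C.NS_mem_support hn₀ ?_)
    rw [hlab, Finsupp.single_eq_same]
    omega
  · refine hxU (C.NS_mem_support hn₀ ?_)
    rw [hlabb, Finsupp.single_eq_same]
    omega

section Forced2

variable (τ : ℕ → FTerm Sig ar)
variable (hτ1 : ∀ u ∈ C.U, τ u = FTerm.subst τ (C.sub u))
variable (hτ2 : ∀ x ∈ domS C.θ, τ x = FTerm.subst τ (C.θ x))

include hτ1 hτ2 in
/-- All NS node variables are unified by any unifier (case with an NS node). -/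
lemma z_forced : ∀ a b, C.NS a → C.NS b → τ (C.z a) = τ (C.z b) := by
  classical
  set val2 : C.G.N → FTerm Sig ar := fun n =>
    if C.NS n then τ (C.z n)
    else if h : ∃ e, C.G.tgt e = n ∧ C.G.layer e ∈ C.U then τ (C.z (C.G.src h.choose))
    else FTerm.var 0 with hval2
  set val : C.G.N → FTerm Sig ar := fun n =>
    if h : ∃ e, C.G.src e = n ∧ ¬ C.NS n then val2 (C.G.tgt h.choose) else val2 n
    with hval
  have hvalNS : ∀ n, C.NS n → val n = τ (C.z n) := by
    intro n hn
    simp only [hval]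
    rw [dif_neg (fun hc : ∃ e, C.G.src e = n ∧ ¬ C.NS n => hc.choose_spec.2 hn)]
    simp only [hval2, if_pos hn]
  have hedge : ∀ e : C.G.E, val (C.G.src e) = val (C.G.tgt e) := by
    intro e
    by_cases hU : C.G.layer e ∈ C.U
    · have hsrcNS := C.NS_of_layer_U hU
      rw [hvalNS _ hsrcNS]
      by_cases hNSt : C.NS (C.G.tgt e)
      · rw [hvalNS _ hNSt]
        exact C.derA τ hτ1 hτ2 hU hNSt
      · -- target is a center
        obtain ⟨v', hv', hv'U, hlabt⟩ := C.label_single_of_not_NS hNSt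
        have hv'd : v' ∉ domS C.θ := by
          intro hv'd
          exact C.leaf_no_in hlabt hv'd e rfl
        have hnoout : ¬ ∃ e', C.G.src e' = C.G.tgt e ∧ ¬ C.NS (C.G.tgt e) :=
          fun ⟨e', he', _⟩ => C.center_no_out hlabt hv'd e' he'
        simp only [hval]
        rw [dif_neg hnoout]
        simp only [hval2]
        rw [if_neg hNSt]
        have hex : ∃ e', C.G.tgt e' = C.G.tgt e ∧ C.G.layer e' ∈ C.U := ⟨e, rfl, hU⟩
        rw [dif_pos hex]
        exact (C.derB τ hτ1 hτ2 hex.choose_spec.2 hU hex.choose_spec.1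
          (by rw [hex.choose_spec.1]; exact hNSt)).symm
    · -- non-U layer: source is a leaf
      have hns : ¬ C.NS (C.G.src e) := C.not_NS_of_layer_not_U hU
      obtain ⟨y, hy, hyU, hlabs⟩ := C.label_single_of_not_NS hns
      have hy2 : y = C.G.layer e := by
        have hpos := C.src_pos (e := e)
        exact (C.single_node_var hlabs _ hpos).symm
      have hyd : y ∈ domS C.θ := hy2 ▸ C.G.layer_mem e
      have hex : ∃ e', C.G.src e' = C.G.src e ∧ ¬ C.NS (C.G.src e) := ⟨e, rfl, hns⟩
      have hchoose : hex.choose = e :=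
        C.leaf_out_unique hlabs hyd hex.choose e hex.choose_spec.1 rfl
      have h1 : val (C.G.src e) = val2 (C.G.tgt e) := by
        simp only [hval]
        rw [dif_pos hex, hchoose]
      have hnooutt : ¬ ∃ e', C.G.src e' = C.G.tgt e ∧ ¬ C.NS (C.G.tgt e) := by
        rintro ⟨e', he', hnst⟩
        obtain ⟨v', hv', hv'U, hlabt⟩ := C.label_single_of_not_NS hnst
        by_cases hv'd : v' ∈ domS C.θ
        · exact C.leaf_no_in hlabt hv'd e rfl
        · exact C.center_no_out hlabt hv'd e' he'
      have h2 : val (C.G.tgt e) = val2 (C.G.tgt e) := by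
        simp only [hval]
        rw [dif_neg hnooutt]
      rw [h1, h2]
  have hmono : ∀ a b, Relation.ReflTransGen C.Adj a b → val a = val b := by
    intro a b h
    induction h with
    | refl => rfl
    | tail _ hadj ih =>
        obtain ⟨e, he⟩ := hadj
        rcases he with ⟨h1, h2⟩ | ⟨h1, h2⟩
        · rw [ih, ← h1, ← h2, hedge e]
        · rw [ih, ← h1, ← h2, hedge e]
  intro a b ha hb
  rw [← hvalNS a ha, ← hvalNS b hb]
  exact hmono a b (C.conn' a b)

end Forced2

end Ctx
namespace Ctx

variable {Sig : Type} {ar : Sig → ℕ} (C : Ctx Sig ar)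

omit C in
lemma occ_pos_of_mem_varsF {v : ℕ} {t : FTerm Sig ar} (h : v ∈ FTerm.varsF t) :
    0 < FTerm.occ v t := by
  have : v ∈ varsT t := by rw [FTerm.varsT_eq_varsF]; exact h
  exact Nat.pos_of_ne_zero this

lemma center_U_edge_of_Cv {m : C.G.N} {v : ℕ}
    (hlab : C.G.label m = Finsupp.single v 1) (hCv : C.Cv v) :
    ∃ e : C.G.E, C.G.tgt e = m ∧ C.G.layer e ∈ C.U := by
  obtain ⟨x, hx, hxU, hvF⟩ := hCv
  have hpos : 0 < Nat.card {e : C.G.E // C.G.layer e = x ∧ C.G.tgt e = m} := by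
    rw [C.G.in_deg m x hx, hlab, chi_single]
    exact occ_pos_of_mem_varsF hvF
  obtain ⟨⟨e, he1, he2⟩⟩ := (Nat.card_pos_iff.mp hpos).1
  exact ⟨e, he2, he1 ▸ hxU⟩

/-- Case C: free variables have `B v = 0`. -/
lemma free_B_zero (hNSex : ∃ n₀, C.NS n₀) {v : ℕ}
    (hvU : v ∉ C.U) (hvC : ¬ C.Cv v) (hvd : v ∉ domS C.θ) : C.B v = 0 := by
  rw [B_apply]
  refine Finset.sum_eq_zero fun n _ => ?_
  by_contra hc
  by_cases hns : C.NS n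
  · exact hvU (C.NS_mem_support hns (Nat.pos_of_ne_zero hc))
  · obtain ⟨v₀, _, hv₀U, hlab⟩ := C.label_single_of_not_NS hns
    have hv0 : v = v₀ := C.single_node_var hlab v (Nat.pos_of_ne_zero hc)
    subst hv0
    obtain ⟨e, he1, he2⟩ := C.center_has_U_edge hNSex hlab hvU hvd
    refine hvC ⟨C.G.layer e, C.G.layer_mem e, he2, ?_⟩
    have hpos := C.tgt_chi_pos (e := e)
    rw [he1, hlab, chi_single] at hpos
    exact FTerm.mem_varsF_of_occ_ne (Nat.pos_iff_ne_zero.mp hpos)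

lemma B_no_U_layer (hNSempty : ∀ n, ¬ C.NS n) : ∀ e : C.G.E, C.G.layer e ∉ C.U :=
  fun e hU => hNSempty _ (C.NS_of_layer_U hU)

lemma varsS_cases {y : ℕ} (h : y ∈ varsS C.θ) : y ∈ domS C.θ ∨ y ∈ rngS C.θ := h

lemma B_center_exists (hNSempty : ∀ n, ¬ C.NS n) :
    ∃ (m : C.G.N) (v : ℕ), C.G.label m = Finsupp.single v 1 ∧ v ∈ rngS C.θ ∧ v ∉ C.U := by
  obtain ⟨n₀⟩ := C.G.nonemptyN
  obtain ⟨y, hy, hyU, hlab⟩ := C.label_single_of_not_NS (hNSempty n₀)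
  rcases C.varsS_cases hy with hyd | hyr
  · have hcard : 0 < Nat.card {e : C.G.E // C.G.layer e = y ∧ C.G.src e = n₀} := by
      rw [C.out_deg' hyd, hlab, Finsupp.single_eq_same]
      omega
    obtain ⟨⟨e, he1, he2⟩⟩ := (Nat.card_pos_iff.mp hcard).1
    obtain ⟨y', hy', hy'U, hlab'⟩ := C.label_single_of_not_NS (hNSempty (C.G.tgt e))
    rcases C.varsS_cases hy' with hy'd | hy'r
    · exact absurd rfl (C.leaf_no_in hlab' hy'd e)
    · exact ⟨C.G.tgt e, y', hlab', hy'r, hy'U⟩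
  · exact ⟨n₀, y, hlab, hyr, hyU⟩

lemma B_center_unique (hNSempty : ∀ n, ¬ C.NS n) {m : C.G.N} {v : ℕ}
    (hlab : C.G.label m = Finsupp.single v 1) (hvd : v ∉ domS C.θ)
    {m' : C.G.N} {v' : ℕ} (hlab' : C.G.label m' = Finsupp.single v' 1)
    (hv'd : v' ∉ domS C.θ) : m' = m := by
  have hnoU : ∀ e : C.G.E, C.G.tgt e = m → C.G.layer e ∉ C.U :=
    fun e _ => C.B_no_U_layer hNSempty e
  rcases C.star_reach hlab hvd hnoU m' (C.conn' m m') with h | ⟨x, hlabb, hxd, _, _⟩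
  · exact h
  · have h1 : (Finsupp.single v' 1 : ℕ →₀ ℕ) = Finsupp.single x 1 :=
      hlab'.symm.trans hlabb
    have h2 : v' = x := Finsupp.single_left_injective one_ne_zero h1
    exact absurd (h2 ▸ hxd) hv'd

lemma B_count (hNSempty : ∀ n, ¬ C.NS n) {m₀ : C.G.N} {v₀ : ℕ}
    (hlab₀ : C.G.label m₀ = Finsupp.single v₀ 1) (hv₀d : v₀ ∉ domS C.θ) :
    ∀ v, v ∉ domS C.θ → C.B v = if v = v₀ then 1 else 0 := by
  intro v hvd
  rw [B_apply]
  by_cases hvv : v = v₀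
  · subst hvv
    rw [if_pos rfl]
    rw [Finset.sum_eq_single m₀]
    · rw [hlab₀, Finsupp.single_eq_same]
    · intro n _ hne
      by_contra hc
      obtain ⟨y, _, _, hlab⟩ := C.label_single_of_not_NS (hNSempty n)
      have hyv : v = y := C.single_node_var hlab v (Nat.pos_of_ne_zero hc)
      rw [← hyv] at hlab
      exact hne (C.B_center_unique hNSempty hlab₀ hv₀d hlab hvd)
    · intro h; exact absurd (Finset.mem_univ m₀) h
  · rw [if_neg hvv]
    refine Finset.sum_eq_zero fun n _ => ?_
    by_contra hc
    obtain ⟨y, _, _, hlab⟩ := C.label_single_of_not_NS (hNSempty n)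
    have hyv : v = y := C.single_node_var hlab v (Nat.pos_of_ne_zero hc)
    rw [← hyv] at hlab
    have := C.B_center_unique hNSempty hlab₀ hv₀d hlab hvd
    subst this
    exact hvv (Finsupp.single_left_injective one_ne_zero (hlab.symm.trans hlab₀))

lemma B_not_Cv_center (hNSempty : ∀ n, ¬ C.NS n) {m₀ : C.G.N} {v₀ : ℕ}
    (hlab₀ : C.G.label m₀ = Finsupp.single v₀ 1) : ¬ C.Cv v₀ := by
  intro hCv
  obtain ⟨e, _, he2⟩ := C.center_U_edge_of_Cv hlab₀ hCv
  exact C.B_no_U_layer hNSempty e he2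

section Forced3

variable (τ : ℕ → FTerm Sig ar) (w : ℕ)
variable (hτ1 : ∀ u ∈ C.U, τ u = FTerm.subst τ (C.sub u))
variable (hτ2 : ∀ x ∈ domS C.θ, τ x = FTerm.subst τ (C.θ x))
variable (K1 : ∀ n, C.NS n → τ (C.z n) = τ w)

include hτ1 hτ2 K1 in
lemma forced0 : ∀ v, v ∉ domS C.θ → τ v = FTerm.subst τ (C.eta0 w v) := by
  intro v hvd
  by_cases hz : ∃ n, C.NS n ∧ C.z n = v
  · obtain ⟨n, hn, rfl⟩ := hz
    rw [eta0, if_pos ⟨n, hn, rfl⟩]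
    exact K1 n hn
  · by_cases hUC : v ∈ C.U ∨ C.Cv v
    · rw [eta0, if_neg hz, if_pos hUC, FTerm.subst_mk]
      by_cases hvU : v ∈ C.U
      · rw [C.canon_eq τ hτ1 hvU hvd]
        refine congrArg (FTerm.mk C.hsig (C.B v)) (funext fun i => ?_)
        show τ (C.z ((C.ψ v) i).val.1) = τ w
        refine K1 _ (C.NS_of_label_U ?_ hvU)
        have := ((C.ψ v) i).2
        omega
      · have hCv : C.Cv v := hUC.resolve_left hvU
        obtain ⟨x, hx, hxU, hvF⟩ := hCv
        obtain ⟨qv, hqv, hqv2⟩ := FTerm.exists_occ hvF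
        obtain ⟨o, ho⟩ := List.get_of_mem hqv
        have hveq : C.vAt x o = v := by
          show ((FTerm.occList (C.θ x)).get o).2 = v
          rw [ho]
          exact hqv2
        have hocc := C.occ_eq τ hτ1 hτ2 hx hxU o
        rw [hveq] at hocc
        rw [hocc]
        refine congrArg (FTerm.mk C.hsig (C.B v)) (funext fun i => ?_)
        show τ (C.z (C.srcAt x hx _ o _)) = τ w
        have hlt : ((C.ψ v) i).val.2 < C.G.label ((C.ψ v) i).val.1 (C.vAt x o) := by
          rw [hveq]; exact ((C.ψ v) i).2
        exact K1 _ (C.srcAt_NS hx hxU _ o _ hlt)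
    · rw [eta0, if_neg hz, if_neg hUC]
      rfl

include hτ1 hτ2 K1 in
lemma forced : ∀ y, τ y = FTerm.subst τ (C.eta w y) := by
  intro y
  by_cases hyd : y ∈ domS C.θ
  · rw [C.eta_dom hyd, FTerm.subst_subst, hτ2 y hyd]
    refine FTerm.subst_congr (fun v hv => ?_)
    have hvr : v ∈ rngS C.θ :=
      Set.mem_biUnion hyd (by rw [FTerm.varsT_eq_varsF]; exact hv)
    exact C.forced0 τ w hτ1 hτ2 K1 v (C.not_domS_of_rngS hvr)
  · rw [C.eta_not_dom hyd]
    exact C.forced0 τ w hτ1 hτ2 K1 y hyd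

end Forced3

section Count

variable (w : ℕ)
variable (K2 : ∀ v, v ∉ C.U → ¬ C.Cv v → v ∉ domS C.θ →
  (¬ ∃ n, C.NS n ∧ C.z n = v) → C.B v = if v = w then 1 else 0)

include K2 in
lemma occ_eta0_w : ∀ v, v ∉ domS C.θ → (∀ n, C.z n ≠ v) →
    FTerm.occ w (C.eta0 w v) = C.B v := by
  intro v hvd hnz
  have hz : ¬ ∃ n, C.NS n ∧ C.z n = v := fun ⟨n, _, h⟩ => hnz n h
  by_cases hUC : v ∈ C.U ∨ C.Cv v
  · rw [eta0, if_neg hz, if_pos hUC, FTerm.occ_mk]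
    simp [occ_var_ite]
  · push_neg at hUC
    rw [eta0, if_neg hz, if_neg (by push_neg; exact hUC), occ_var_ite,
      K2 v hUC.1 hUC.2 hvd hz]

include K2 in
lemma occ_eta_w : ∀ y, y ∈ C.U ∨ y ∈ varsS C.θ → FTerm.occ w (C.eta w y) = C.B y := by
  intro y hy
  have hnz : ∀ n, C.z n ≠ y := by
    rcases hy with hy | hy
    · exact C.not_z_of_U hy
    · rcases C.varsS_cases hy with hy | hy
      · exact fun n hn => C.z_not_dom n (hn ▸ hy)
      · exact C.not_z_of_rng hy
  by_cases hyd : y ∈ domS C.θ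
  · rw [C.eta_dom hyd, FTerm.occ_subst, C.F2 hyd]
    refine Finset.sum_congr rfl fun r hr => ?_
    have hrr : r ∈ rngS C.θ :=
      Set.mem_biUnion hyd (by rw [FTerm.varsT_eq_varsF]; exact hr)
    rw [C.occ_eta0_w w K2 r (C.not_domS_of_rngS hrr) (C.not_z_of_rng hrr)]
  · rw [C.eta_not_dom hyd]
    exact C.occ_eta0_w w K2 y hyd hnz

end Count

omit C in
lemma occ_var_ne {t s : ℕ} (h : FTerm.occ t (FTerm.var s : FTerm Sig ar) ≠ 0) : s = t := by
  rw [occ_var_ite] at h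
  by_contra hc
  rw [if_neg hc] at h
  exact h rfl

lemma occ_eta0_vars {w v t : ℕ} (h : FTerm.occ t (C.eta0 w v) ≠ 0) :
    t = w ∨ (t = v ∧ C.eta0 w v = FTerm.var v) := by
  rw [eta0] at h
  split_ifs at h with h1 h2
  · exact Or.inl (occ_var_ne h).symm
  · rw [FTerm.occ_mk] at h
    left
    by_contra hc
    refine h (Finset.sum_eq_zero fun i _ => ?_)
    rw [occ_var_ite, if_neg (fun hh => hc hh.symm)]
  · refine Or.inr ⟨(occ_var_ne h).symm, ?_⟩
    rw [eta0, if_neg h1, if_neg h2]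

lemma rng_eta_fixed {w : ℕ} (hwd : w ∉ domS C.θ) (hw0 : C.eta0 w w = FTerm.var w) :
    ∀ x t, FTerm.occ t (C.eta w x) ≠ 0 → C.eta w t = FTerm.var t := by
  have key : ∀ v, v ∉ domS C.θ → ∀ t, FTerm.occ t (C.eta0 w v) ≠ 0 →
      C.eta w t = FTerm.var t := by
    intro v hvd t h0
    rcases C.occ_eta0_vars h0 with rfl | ⟨rfl, hfix⟩
    · rw [C.eta_not_dom hwd, hw0]
    · rw [C.eta_not_dom hvd, hfix]
  intro x t h
  by_cases hxd : x ∈ domS C.θ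
  · rw [C.eta_dom hxd, FTerm.occ_subst] at h
    have : ∃ u ∈ FTerm.varsF (C.θ x), FTerm.occ t (C.eta0 w u) ≠ 0 := by
      by_contra hc
      push_neg at hc
      refine h (Finset.sum_eq_zero fun u hu => ?_)
      rw [hc u hu, mul_zero]
    obtain ⟨u, hu, hne⟩ := this
    have hur : u ∈ rngS C.θ :=
      Set.mem_biUnion hxd (by rw [FTerm.varsT_eq_varsF]; exact hu)
    exact key u (C.not_domS_of_rngS hur) t hne
  · rw [C.eta_not_dom hxd] at h
    exact key x hxd t h

lemma idem_eta {w : ℕ} (hwd : w ∉ domS C.θ) (hw0 : C.eta0 w w = FTerm.var w) :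
    Idem (C.eta w) := by
  rw [Idem, Set.eq_empty_iff_forall_notMem]
  rintro y ⟨hyd, hyr⟩
  obtain ⟨x, hx, hy⟩ := Set.mem_iUnion₂.mp hyr
  exact hyd (C.rng_eta_fixed hwd hw0 x y hy)

lemma domS_eta_finite (w : ℕ) : (domS (C.eta w)).Finite := by
  refine Set.Finite.subset (Set.Finite.union (C.avoid.finite_toSet)
    (Set.finite_range C.z)) ?_
  intro y hy
  by_contra hc
  simp only [Set.mem_union, Finset.mem_coe, Set.mem_range, not_or, not_exists] at hc
  obtain ⟨hav, hnz⟩ := hc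
  have hyU : y ∉ C.U := fun h => hav (Finset.mem_union_left _ (Finset.mem_union_left _ h))
  have hyd : y ∉ domS C.θ := fun h =>
    hav (Finset.mem_union_left _ (Finset.mem_union_right _ (C.mem_D.mpr h)))
  have hyC : ¬ C.Cv y := by
    intro hC
    obtain ⟨x, hx, _, hvF⟩ := hC
    refine hav (Finset.mem_union_right _ ?_)
    exact Finset.mem_biUnion.mpr ⟨x, C.mem_D.mpr hx, hvF⟩
  refine hy ?_
  show C.eta w y = FTerm.var y
  rw [C.eta_not_dom hyd, C.eta0_var (fun ⟨n, _, hzn⟩ => hnz n hzn)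
    (fun h => h.elim hyU hyC)]

lemma varsS_sub_inter : varsS C.sub ∩ varsS C.θ ⊆ ↑C.U := by
  rintro y ⟨h1, h2⟩
  rcases h1 with h1 | h1
  · rw [C.domS_sub] at h1
    exact h1
  · obtain ⟨n, rfl⟩ := C.rngS_sub_z h1
    rcases C.varsS_cases h2 with h2 | h2
    · exact absurd h2 (C.z_not_dom n)
    · exact absurd h2 (C.z_not_rng n)

end Ctx

/-- Theorem 3 of the paper: optimality of parallel abstract
unification in the general case, where `θ` may have variables outside the set
`U` of variables of interest.  Here `V = U ∪ vars(θ)` and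
`S' = S ∪ { {{v}} : v ∈ vars(θ)\U }`.  The signature is assumed to contain a
function symbol of each arity (as needed for the construction in the paper). -/
theorem mguP_optimal_general (Sig : Type) (ar : Sig → ℕ)
    (hsig : ∀ k : ℕ, ∃ f : Sig, ar f = k)
    (U : Finset ℕ) (S : Set (ℕ →₀ ℕ))
    (hS0 : (0 : ℕ →₀ ℕ) ∈ S)
    (hSU : ∀ B ∈ S, ∀ v ∈ (B : ℕ →₀ ℕ).support, v ∈ U)
    (θ : ℕ → FTerm Sig ar) (hfin : (domS θ).Finite) (hidem : Idem θ)
    (V : Finset ℕ) (hV : (V : Set ℕ) = ↑U ∪ varsS θ)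
    (S' : Set (ℕ →₀ ℕ))
    (hS' : S' = S ∪ { A | ∃ v ∈ varsS θ \ ↑U, A = Finsupp.single v 1 })
    (B : ℕ →₀ ℕ) (hB : B ∈ mguP S' θ) :
    ∃ δ : ℕ → FTerm Sig ar,
      (domS δ).Finite ∧ Idem δ ∧
      varsS (projS U δ) ∩ varsS θ ⊆ ↑U ∧
      (∀ v : ℕ, restr U (invSub δ v) ∈ S) ∧
      ∃ η : ℕ → FTerm Sig ar,
        (domS η).Finite ∧ Idem η ∧
        IsMGU η (EqSet (projS U δ) ∪ EqSet θ) ∧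
        ∃ w : ℕ, restr V (invSub η w) = B := by
  classical
  obtain ⟨G, hGres⟩ := hB
  let C : Ctx Sig ar := ⟨hsig, U, S, hS0, hSU, θ, hfin, hidem, S', hS', G⟩
  have hCB : C.B = B := hGres
  have hE : EqSet (projS U C.sub) ∪ EqSet θ = EqSet C.sub ∪ EqSet C.θ := by
    rw [show projS U C.sub = projS C.U C.sub from rfl, C.projS_sub]
  have hmemV : ∀ y : ℕ, y ∈ V ↔ (y ∈ U ∨ y ∈ varsS θ) := by
    intro y
    have h1 := Set.ext_iff.mp hV y
    simpa using h1
  -- a master lemma producing η from the case-specific inputs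
  have main : ∀ w : ℕ, w ∉ domS C.θ → C.eta0 w w = FTerm.var w →
      (∀ τ : ℕ → FTerm Sig ar, (∀ u ∈ C.U, τ u = FTerm.subst τ (C.sub u)) →
        (∀ x ∈ domS C.θ, τ x = FTerm.subst τ (C.θ x)) →
        ∀ n, C.NS n → τ (C.z n) = τ w) →
      (∀ v, v ∉ C.U → ¬ C.Cv v → v ∉ domS C.θ →
        (¬ ∃ n, C.NS n ∧ C.z n = v) → C.B v = if v = w then 1 else 0) →
      ∃ η : ℕ → FTerm Sig ar,
        (domS η).Finite ∧ Idem η ∧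
        IsMGU η (EqSet (projS U C.sub) ∪ EqSet θ) ∧
        ∃ w : ℕ, restr V (invSub η w) = B := by
    intro w hwd hw0 K1 K2
    refine ⟨C.eta w, C.domS_eta_finite w, C.idem_eta hwd hw0, ⟨?_, ?_⟩, w, ?_⟩
    · rw [hE]
      exact C.unifies_eta w
    · intro τ hτ
      rw [hE] at hτ
      have hτ1 : ∀ u ∈ C.U, τ u = FTerm.subst τ (C.sub u) := by
        intro u hu
        have hmem : (FTerm.var u, C.sub u) ∈ EqSet C.sub ∪ EqSet C.θ :=
          Or.inl ⟨u, by rw [C.domS_sub]; exact hu, rfl⟩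
        exact hτ _ hmem
      have hτ2 : ∀ x ∈ domS C.θ, τ x = FTerm.subst τ (C.θ x) := by
        intro x hx
        exact hτ _ (Or.inr ⟨x, hx, rfl⟩)
      exact ⟨τ, C.forced τ w hτ1 hτ2 (K1 τ hτ1 hτ2)⟩
    · ext y
      rw [restr_apply]
      by_cases hyV : y ∈ V
      · rw [if_pos hyV, ← hCB]
        exact C.occ_eta_w w K2 y ((hmemV y).mp hyV)
      · rw [if_neg hyV, ← hCB]
        have hy := (hmemV y).not.mp hyV
        push_neg at hy
        exact (C.B_outside hy.1 hy.2).symm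
  refine ⟨C.sub, ?_, C.idem_sub, ?_, fun v => C.restr_col v, ?_⟩
  · rw [C.domS_sub]
    exact U.finite_toSet
  · rw [show projS U C.sub = projS C.U C.sub from rfl, C.projS_sub]
    exact C.varsS_sub_inter
  by_cases hNS : ∃ n₀, C.NS n₀
  · -- case C
    refine main (C.z hNS.choose) (C.z_not_dom _) (C.eta0_z hNS.choose_spec) ?_ ?_
    · intro τ hτ1 hτ2 n hn
      exact C.z_forced τ hτ1 hτ2 n hNS.choose hn hNS.choose_spec
    · intro v h1 h2 h3 h4
      have hvw : v ≠ C.z hNS.choose :=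
        fun h => h4 ⟨hNS.choose, hNS.choose_spec, h.symm⟩
      rw [C.free_B_zero hNS h1 h2 h3, if_neg hvw]
  · -- case B
    push_neg at hNS
    obtain ⟨m₀, v₀, hlab₀, hv₀r, hv₀U⟩ := C.B_center_exists hNS
    have hv₀d : v₀ ∉ domS C.θ := C.not_domS_of_rngS hv₀r
    have hnCv : ¬ C.Cv v₀ := C.B_not_Cv_center hNS hlab₀
    refine main v₀ hv₀d
      (C.eta0_var (fun ⟨n, hn, _⟩ => hNS n hn) (fun h => h.elim hv₀U hnCv)) ?_ ?_
    · intro τ _ _ n hn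
      exact absurd hn (hNS n)
    · intro v _ _ h3 _
      exact C.B_count hNS hlab₀ hv₀d v h3
end

section
/- Let x and y be distinct variables, let r be a binary function symbol of the signature (so that the multiset x¹y¹ is an ω-sharing group), and let S = { ∅, x¹y¹ } where ∅ is the empty multiset. Then mgu_p(S, {x/y}) = { ∅ } ∪ { xⁱyⁱ : i ≥ 1 }, where xⁱyⁱ denotes the multiset containing the variable x with multiplicity i and the variable y with multiplicity i. In particular, the parallel abstract unification of a finite set of ω-sharing groups with a single-binding substitution can be an infinite set of ω-sharing groups. -/
open Classical

variable {Sig : Type} {ar : Sig → ℕ}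

section Aux

variable {Sig : Type} {ar : Sig → ℕ}

lemma domS_sbind (x y : ℕ) (hxy : x ≠ y) :
    domS (sbind x (FTerm.var y : FTerm Sig ar)) = {x} := by
  ext v
  simp only [domS, sbind, Set.mem_setOf_eq, Set.mem_singleton_iff]
  constructor
  · intro h
    by_contra hv
    simp [if_neg hv] at h
  · intro h
    subst h
    simp only [if_pos rfl]
    intro hc
    injection hc with h'
    exact hxy h'.symm

lemma chi_var (B : ℕ →₀ ℕ) (v : ℕ) : chi B (FTerm.var v : FTerm Sig ar) = B v := by
  unfold chi
  simp only [FTerm.occ, mul_ite, mul_one, mul_zero]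
  rw [Finset.sum_ite_eq B.support v (fun w => B w)]
  by_cases h : v ∈ B.support
  · simp [h]
  · simp [h, Finsupp.notMem_support_iff.mp h]

lemma chi_zero (t : FTerm Sig ar) : chi 0 t = 0 := by
  simp [chi]

end Aux

/-- Example 6 of the paper: for distinct variables `x`, `y`
(and a binary function symbol `r` in the signature), the parallel abstract
unification of the finite set `S = {∅, x¹y¹}` of ω-sharing groups with the
single-binding substitution `{x/y}` is the infinite set
`{∅} ∪ { xⁱyⁱ : i ≥ 1 }`. -/
theorem mguP_singleton_binding_infinite (Sig : Type) (ar : Sig → ℕ)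
    (r : Sig) (hr : ar r = 2)
    (x y : ℕ) (hxy : x ≠ y) :
    mguP ({0, Finsupp.single x 1 + Finsupp.single y 1} : Set (ℕ →₀ ℕ))
        (sbind x (FTerm.var y : FTerm Sig ar))
      = {0} ∪ { B : ℕ →₀ ℕ | ∃ i : ℕ, 1 ≤ i ∧
          B = Finsupp.single x i + Finsupp.single y i } := by
  classical
  set xy : ℕ →₀ ℕ := Finsupp.single x 1 + Finsupp.single y 1 with hxydef
  have hdom : domS (sbind x (FTerm.var y : FTerm Sig ar)) = {x} := domS_sbind x y hxy
  have hxyx : xy x = 1 := by simp [hxydef, Finsupp.single_apply, hxy, Ne.symm hxy]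
  have hxyy : xy y = 1 := by simp [hxydef, Finsupp.single_apply, hxy, Ne.symm hxy]
  have hsmul : ∀ k : ℕ, k • xy = Finsupp.single x k + Finsupp.single y k := by
    intro k
    simp [hxydef, smul_add, Finsupp.smul_single]
  ext B
  constructor
  · rintro ⟨G, rfl⟩
    have h0xy : (0 : ℕ →₀ ℕ) ≠ xy := by
      intro hc
      have := congrArg (fun f => f x) hc
      simp [hxyx] at this
    have hlab : ∀ n : G.N, G.label n = if G.label n = xy then xy else 0 := by
      intro n
      rcases G.label_mem n with h | h
      · rw [h, if_neg h0xy]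
      · rw [h, if_pos rfl]
    have hres : G.res = (Finset.univ.filter (fun n : G.N => G.label n = xy)).card • xy := by
      unfold PSG.res
      rw [Finset.sum_congr rfl (fun n _ => hlab n)]
      rw [Finset.sum_ite, Finset.sum_const, Finset.sum_const_zero, add_zero]
    set k := (Finset.univ.filter (fun n : G.N => G.label n = xy)).card with hk
    rcases Nat.eq_zero_or_pos k with h0 | hpos
    · left
      simp [hres, h0]
    · right
      exact ⟨k, hpos, by rw [hres, hsmul]⟩
  · rintro (hB | ⟨i, hi, rfl⟩)
    · -- the empty graph (one node labeled 0, no edges)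
      refine ⟨{
        N := Unit
        fintypeN := inferInstance
        nonemptyN := inferInstance
        E := Empty
        fintypeE := inferInstance
        layer := Empty.elim
        src := Empty.elim
        tgt := Empty.elim
        label := fun _ => 0
        label_mem := fun _ => Or.inl rfl
        layer_mem := fun e => e.elim
        out_deg := by
          intro n z hz
          rw [chi_zero]
          simp [Nat.card_eq_fintype_card]
        in_deg := by
          intro n z hz
          rw [chi_zero]
          simp [Nat.card_eq_fintype_card]
        conn := by
          intro a b
          cases a; cases b
          exact Relation.ReflTransGen.refl }, ?_⟩
      simp only [Set.mem_singleton_iff] at hB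
      rw [hB]
      unfold PSG.res
      simp
    · -- the cycle graph on i nodes, all labeled xy
      obtain ⟨m, rfl⟩ : ∃ m, i = m + 1 := ⟨i - 1, (Nat.succ_pred_eq_of_pos hi).symm⟩
      refine ⟨{
        N := Fin (m + 1)
        fintypeN := inferInstance
        nonemptyN := inferInstance
        E := Fin (m + 1)
        fintypeE := inferInstance
        layer := fun _ => x
        src := fun e => e
        tgt := fun e => e + 1
        label := fun _ => xy
        label_mem := fun _ => Or.inr rfl
        layer_mem := fun _ => by rw [hdom]; rfl
        out_deg := by
          intro n z hz
          rw [hdom] at hz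
          have hz' : z = x := hz
          subst hz'
          rw [chi_var, hxyx]
          have hequiv : ∀ e : Fin (m + 1), ((z = z ∧ e = n) ↔ e = n) := by
            intro e
            exact ⟨fun h => h.2, fun h => ⟨rfl, h⟩⟩
          rw [Nat.card_congr (Equiv.subtypeEquivRight hequiv)]
          simp [Nat.card_eq_fintype_card]
        in_deg := by
          intro n z hz
          rw [hdom] at hz
          have hz' : z = x := hz
          subst hz'
          have hsb : sbind z (FTerm.var y : FTerm Sig ar) z = FTerm.var y := by
            simp [sbind]
          rw [hsb, chi_var, hxyy]
          have hequiv : ∀ e : Fin (m + 1), ((z = z ∧ e + 1 = n) ↔ e = n - 1) := by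
            intro e
            constructor
            · rintro ⟨-, h⟩
              exact eq_sub_iff_add_eq.mpr h
            · rintro rfl
              exact ⟨rfl, sub_add_cancel n 1⟩
          rw [Nat.card_congr (Equiv.subtypeEquivRight hequiv)]
          simp [Nat.card_eq_fintype_card]
        conn := by
          intro a b
          set R : Fin (m + 1) → Fin (m + 1) → Prop := fun a b =>
            ∃ e : Fin (m + 1), ((fun e => e) e = a ∧ (fun e => e + 1) e = b) ∨
              ((fun e => e) e = b ∧ (fun e => e + 1) e = a) with hR
          have hsymm : Symmetric R := by
            rintro u v ⟨e, h⟩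
            exact ⟨e, h.symm⟩
          have h0 : ∀ c : Fin (m + 1), Relation.ReflTransGen R 0 c := by
            intro c
            induction c using Fin.induction with
            | zero => exact Relation.ReflTransGen.refl
            | succ j ih =>
              exact ih.tail ⟨j.castSucc, Or.inl ⟨rfl, Fin.coeSucc_eq_succ⟩⟩
          have hsym' : Symmetric (Relation.ReflTransGen R) :=
            fun u v h => (haveI : Std.Symm R := ⟨fun a b hab => hsymm hab⟩; (Relation.ReflTransGen.stdSymm (r := R)).symm u v h)
          exact (hsym' (h0 a)).trans (h0 b) }, ?_⟩
      unfold PSG.res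
      simp only [Finset.sum_const, Finset.card_univ, Fintype.card_fin]
      exact hsmul (m + 1)
end

section
/- The abstraction map α_ω is invariant under the equivalence ~_U: if θ₁ and θ₂ are idempotent substitutions and there exists a renaming ρ with θ₁(v) = ρ(θ₂(v)) for all v in a finite set U of variables, then { θ₁⁻¹(v)|_U : v ∈ 𝒱 } = { θ₂⁻¹(v)|_U : v ∈ 𝒱 }. Hence α_ω([θ]_U) = [{ θ⁻¹(v)|_U : v ∈ 𝒱 }]_U is well defined on equivalence classes of substitutions modulo ~_U. -/
open Classical

variable {Sig : Type} {ar : Sig → ℕ}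

/-- A renaming: a substitution which is a bijection from the set of variables
to itself (it maps variables to variables via a bijection `g`). -/
def IsRenaming (ρ : ℕ → FTerm Sig ar) : Prop :=
  (domS ρ).Finite ∧
  ∃ g : ℕ → ℕ, Function.Bijective g ∧ ∀ v : ℕ, ρ v = FTerm.var (g v)

lemma occ_subst_renaming (g : ℕ ≃ ℕ) (ρ : ℕ → FTerm Sig ar)
    (hρ : ∀ v, ρ v = FTerm.var (g v)) (v : ℕ) (t : FTerm Sig ar) :
    FTerm.occ v (FTerm.subst ρ t) = FTerm.occ (g.symm v) t := by
  induction t with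
  | var w =>
      simp only [FTerm.subst, hρ, FTerm.occ]
      by_cases h : g w = v
      · simp [h, (Equiv.symm_apply_eq g).mpr h.symm]
      · have h2 : w ≠ g.symm v := by
          intro hw; exact h (by rw [hw]; simp)
        simp [h, h2]
  | app f ts ih =>
      simp only [FTerm.subst, FTerm.occ]
      exact Finset.sum_congr rfl fun i _ => ih i

/-- the abstraction map `α_ω` is invariant under `~_U`.  If
`θ₁` and `θ₂` are idempotent substitutions related by a renaming `ρ` on the
finite set `U` of variables of interest, then the sets of restricted
ω-sharing groups `{ θ₁⁻¹(v)|_U : v ∈ 𝒱 }` and `{ θ₂⁻¹(v)|_U : v ∈ 𝒱 }`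
coincide; hence `α_ω` is well defined on equivalence classes modulo `~_U`. -/
theorem alpha_omega_well_defined (Sig : Type) (ar : Sig → ℕ) (U : Finset ℕ)
    (θ₁ θ₂ : ℕ → FTerm Sig ar)
    (h₁fin : (domS θ₁).Finite) (h₁idem : Idem θ₁)
    (h₂fin : (domS θ₂).Finite) (h₂idem : Idem θ₂)
    (ρ : ℕ → FTerm Sig ar) (hρ : IsRenaming ρ)
    (hsim : ∀ v ∈ U, θ₁ v = FTerm.subst ρ (θ₂ v)) :
    { A : ℕ →₀ ℕ | ∃ v : ℕ, A = restr U (invSub θ₁ v) }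
      = { A : ℕ →₀ ℕ | ∃ v : ℕ, A = restr U (invSub θ₂ v) } := by
  obtain ⟨-, g, hgbij, hgvar⟩ := hρ
  let e := Equiv.ofBijective g hgbij
  have hvar : ∀ v, ρ v = FTerm.var (e v) := hgvar
  have key : ∀ v, restr U (invSub θ₁ v) = restr U (invSub θ₂ (e.symm v)) := by
    intro v
    ext w
    simp only [restr, Finsupp.onFinset_apply]
    by_cases hw : w ∈ U
    · simp only [hw, if_true, invSub, hsim w hw,
        occ_subst_renaming e ρ hvar v (θ₂ w)]
    · simp [hw]
  ext A
  constructor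
  · rintro ⟨v, rfl⟩
    exact ⟨e.symm v, key v⟩
  · rintro ⟨v, rfl⟩
    exact ⟨e v, by rw [key (e v), Equiv.symm_apply_apply]⟩
end
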